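/- arXiv:2404.14001 — 8 statements merged into one kernel-verified Lean document; each statement's English description precedes it below -/
import Mathlib

section
/- Let n ≥ 7 be odd and let g be the complex n-dimensional Lie algebra with basis e_1,…,e_n and nonzero brackets [e_1,e_i] = e_{i+1} for 2 ≤ i ≤ n−2 and [e_i,e_{n−i}] = (−1)^i e_n for 2 ≤ i ≤ (n−1)/2. If φ is a 1/2-derivation of g, then φ(e_n) = α e_n, where α is the coefficient of e_1 in φ(e_1). -/
/-- For odd n ≥ 7, any 1/2-derivation of g^1_{(n,1)} satisfies φ(e_n) = α₁ e_n,
where α₁ is the coefficient of e_1 in φ(e_1). -/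
theorem g1n1_half_derivation_en
    (n : ℕ) (hn : 7 ≤ n) (hodd : Odd n)
    (L : Type*) [LieRing L] [LieAlgebra ℂ L]
    (e : ℕ → L) (b : Module.Basis (Fin n) ℂ L)
    (hb : ∀ i : Fin n, e (i.1 + 1) = b i)
    (htab : ∀ i j : ℕ, 1 ≤ i → i < j → j ≤ n →
      ⁅e i, e j⁆ =
        if i = 1 ∧ 2 ≤ j ∧ j ≤ n - 2 then e (j + 1)
        else if 2 ≤ i ∧ i + j = n then ((-1 : ℂ) ^ i) • e n
        else 0)
    (φ : L →ₗ[ℂ] L)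
    (hφ : ∀ x y : L, φ ⁅x, y⁆ = (2 : ℂ)⁻¹ • (⁅φ x, y⁆ + ⁅x, φ y⁆)) :
    φ (e n) = (b.repr (φ (e 1)) ⟨0, by omega⟩) • e n := by
  obtain ⟨t, ht⟩ := hodd
  have he : ∀ k : ℕ, 1 ≤ k → ∀ h : k - 1 < n, e k = b ⟨k - 1, h⟩ := by
    intro k hk h
    have h2 : e (k - 1 + 1) = b ⟨k - 1, h⟩ := hb ⟨k - 1, h⟩
    rw [Nat.sub_add_cancel hk] at h2
    exact h2
  have hrepr : ∀ (k : ℕ) (i : Fin n), 1 ≤ k → k ≤ n →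
      b.repr (e k) i = if k = i.1 + 1 then 1 else 0 := by
    intro k i hk hkn
    rw [he k hk (by omega), b.repr_self, Finsupp.single_apply]
    by_cases h : k = i.1 + 1
    · rw [if_pos h, if_pos]
      exact Fin.ext (by simp; omega)
    · rw [if_neg, if_neg h]
      intro hc
      exact h (by have := congrArg Fin.val hc; simp at this; omega)
  have hbrkt : ∀ j p : ℕ, 2 ≤ j → j ≤ n - 2 → p = n - j - 1 →
      ∀ (h0 : 0 < n) (hp : p < n) (x : L),
      ⁅x, e j⁆ = (b.repr x ⟨0, h0⟩) • e (j + 1)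
        + (b.repr x ⟨p, hp⟩) • (((-1 : ℂ) ^ (n - j)) • e n) := by
    intro j p hj2 hjn hpdef h0 hp
    subst hpdef
    have hpow : ((-1 : ℂ)) ^ (n - j) = -(-1 : ℂ) ^ j := by
      rcases Nat.even_or_odd j with hev | hod
      · obtain ⟨r, hr⟩ := hev
        rw [Even.neg_one_pow ⟨r, hr⟩, Odd.neg_one_pow ⟨t - r, by omega⟩]
        try norm_num
      · obtain ⟨r, hr⟩ := hod
        rw [Odd.neg_one_pow ⟨r, hr⟩, Even.neg_one_pow ⟨t - r, by omega⟩]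
        norm_num
    have key : (-(LieAlgebra.ad ℂ L (e j)) : L →ₗ[ℂ] L)
        = (b.coord ⟨0, h0⟩).smulRight (e (j + 1))
          + (b.coord ⟨n - j - 1, hp⟩).smulRight (((-1 : ℂ) ^ (n - j)) • e n) := by
      apply b.ext
      intro i
      rw [← hb i]
      obtain ⟨k, hkdef⟩ : ∃ k, k = i.1 + 1 := ⟨_, rfl⟩
      rw [← hkdef]
      have hk1 : 1 ≤ k := by omega
      have hkn : k ≤ n := by omega
      simp only [LinearMap.neg_apply, LieAlgebra.ad_apply, LinearMap.add_apply,
        LinearMap.smulRight_apply, Module.Basis.coord_apply]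
      rw [hrepr k _ hk1 hkn, hrepr k _ hk1 hkn]
      have hidx0 : ((⟨0, h0⟩ : Fin n) : ℕ) = 0 := rfl
      have hidx1 : ((⟨n - j - 1, hp⟩ : Fin n) : ℕ) = n - j - 1 := rfl
      rw [hidx0, hidx1]
      rcases Nat.lt_trichotomy k j with hlt | heq | hgt
      · rw [lie_skew, htab k j (by omega) hlt (by omega)]
        split_ifs <;>
          first
            | (exfalso; omega)
            | (rw [show k = n - j by omega]; simp)
            | simp
      · rw [heq, lie_self, neg_zero]
        split_ifs <;> first | (exfalso; omega) | simp
      · rw [htab j k (by omega) hgt hkn]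
        split_ifs <;>
          first
            | (exfalso; omega)
            | (rw [hpow]; simp)
            | simp
    intro x
    have hx := LinearMap.congr_fun key x
    simp only [LinearMap.neg_apply, LieAlgebra.ad_apply, LinearMap.add_apply,
      LinearMap.smulRight_apply, Module.Basis.coord_apply] at hx
    rw [lie_skew] at hx
    exact hx
  have had1 : ∀ k : ℕ, 1 ≤ k → k ≤ n →
      ⁅e 1, e k⁆ = if 2 ≤ k ∧ k ≤ n - 2 then e (k + 1) else 0 := by
    intro k h1 h2
    rcases eq_or_lt_of_le h1 with h | h
    · rw [← h, lie_self, if_neg (by omega)]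
    · rw [htab 1 k le_rfl h h2]
      by_cases hc : 2 ≤ k ∧ k ≤ n - 2
      · rw [if_pos ⟨rfl, hc.1, hc.2⟩, if_pos hc]
      · rw [if_neg (fun h' => hc ⟨h'.2.1, h'.2.2⟩), if_neg (by omega), if_neg hc]
  -- C1 : coord 1 of ⁅e 1, y⁆ is zero
  have hC1 : ∀ (h0 : 0 < n) (y : L), b.repr ⁅e 1, y⁆ ⟨0, h0⟩ = 0 := by
    intro h0
    have key : (b.coord ⟨0, h0⟩) ∘ₗ (LieAlgebra.ad ℂ L (e 1) : L →ₗ[ℂ] L) = 0 := by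
      apply b.ext
      intro i
      rw [← hb i]
      obtain ⟨k, hkdef⟩ : ∃ k, k = i.1 + 1 := ⟨_, rfl⟩
      rw [← hkdef]
      have hk1 : 1 ≤ k := by omega
      have hkn : k ≤ n := by omega
      simp only [LinearMap.comp_apply, LieAlgebra.ad_apply, Module.Basis.coord_apply,
        LinearMap.zero_apply]
      rw [had1 k hk1 hkn]
      split_ifs with h
      · rw [hrepr (k + 1) _ (by omega) (by omega)]
        have hidx0 : ((⟨0, h0⟩ : Fin n) : ℕ) = 0 := rfl
        rw [hidx0, if_neg (by omega)]
      · simp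
    intro y
    have := LinearMap.congr_fun key y
    simpa using this
  -- C2 : coord m of ⁅e 1, y⁆ is coord (m-1) of y, for 3 ≤ m ≤ n-1
  have hC2 : ∀ (m p q : ℕ), 3 ≤ m → m ≤ n - 1 → p = m - 1 → q = m - 2 →
      ∀ (h1 : p < n) (h2 : q < n) (y : L),
      b.repr ⁅e 1, y⁆ ⟨p, h1⟩ = b.repr y ⟨q, h2⟩ := by
    intro m p q hm3 hmn hp hq h1 h2
    subst hp
    subst hq
    have key : (b.coord ⟨m - 1, h1⟩) ∘ₗ (LieAlgebra.ad ℂ L (e 1) : L →ₗ[ℂ] L)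
        = b.coord ⟨m - 2, h2⟩ := by
      apply b.ext
      intro i
      rw [← hb i]
      obtain ⟨k, hkdef⟩ : ∃ k, k = i.1 + 1 := ⟨_, rfl⟩
      rw [← hkdef]
      have hk1 : 1 ≤ k := by omega
      have hkn : k ≤ n := by omega
      simp only [LinearMap.comp_apply, LieAlgebra.ad_apply, Module.Basis.coord_apply]
      rw [had1 k hk1 hkn, hrepr k _ hk1 hkn]
      have hidx2 : ((⟨m - 2, h2⟩ : Fin n) : ℕ) = m - 2 := rfl
      rw [hidx2]
      split_ifs with hc hc2 hc3
      · rw [hrepr (k + 1) _ (by omega) (by omega)]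
        have hidx1 : ((⟨m - 1, h1⟩ : Fin n) : ℕ) = m - 1 := rfl
        rw [hidx1, if_pos (by omega)]
      · rw [hrepr (k + 1) _ (by omega) (by omega)]
        have hidx1 : ((⟨m - 1, h1⟩ : Fin n) : ℕ) = m - 1 := rfl
        rw [hidx1, if_neg (by omega)]
      · exfalso; omega
      · simp
    intro y
    have := LinearMap.congr_fun key y
    simpa using this
  obtain ⟨α, hα⟩ : ∃ a : ℂ, ∀ h0 : 0 < n, a = b.repr (φ (e 1)) ⟨0, h0⟩ :=
    ⟨b.repr (φ (e 1)) ⟨0, by omega⟩, fun h0 => rfl⟩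
  obtain ⟨d, hd⟩ : ∃ d : ℕ → ℂ, ∀ (i p : ℕ), p + 1 = i → ∀ h : p < n,
      d i = b.repr (φ (e i)) ⟨p, h⟩ := by
    refine ⟨fun i => if h : i - 1 < n then b.repr (φ (e i)) ⟨i - 1, h⟩ else 0, ?_⟩
    intro i p hpi h
    subst hpi
    show (if h' : p + 1 - 1 < n then b.repr (φ (e (p + 1))) ⟨p + 1 - 1, h'⟩ else 0) = _
    rw [dif_pos (show p + 1 - 1 < n by omega)]
    rfl
  -- F1 : coefficient of e_1 in φ(e_j) vanishes for 3 ≤ j ≤ n-1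
  have hF1 : ∀ j : ℕ, 3 ≤ j → j ≤ n - 1 → ∀ h0 : 0 < n,
      b.repr (φ (e j)) ⟨0, h0⟩ = 0 := by
    intro j h3 hjn h0
    have hej : ⁅e 1, e (j - 1)⁆ = e j := by
      rw [had1 (j - 1) (by omega) (by omega), if_pos ⟨by omega, by omega⟩,
        show j - 1 + 1 = j by omega]
    have h := hφ (e 1) (e (j - 1))
    rw [hej, hbrkt (j - 1) (n - (j - 1) - 1) (by omega) (by omega) rfl h0 (by omega)
      (φ (e 1))] at h
    have h' := congrArg (fun z => b.repr z (⟨0, h0⟩ : Fin n)) h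
    simp only [map_smul, map_add, Finsupp.smul_apply, Finsupp.add_apply, smul_eq_mul] at h'
    rw [hrepr (j - 1 + 1) _ (by omega) (by omega), hrepr n _ (by omega) le_rfl,
      hC1 h0 (φ (e (j - 1)))] at h'
    have hidx0 : ((⟨0, h0⟩ : Fin n) : ℕ) = 0 := rfl
    rw [hidx0, if_neg (by omega), if_neg (by omega)] at h'
    rw [h']
    ring
  -- F2 : recurrence for diagonal coefficients
  have hF2 : ∀ i : ℕ, 2 ≤ i → i ≤ n - 2 → d (i + 1) = 2⁻¹ * (α + d i) := by
    intro i h2 hin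
    have hei : ⁅e 1, e i⁆ = e (i + 1) := by
      rw [had1 i (by omega) (by omega), if_pos ⟨h2, hin⟩]
    have h := hφ (e 1) (e i)
    rw [hei, hbrkt i (n - i - 1) h2 hin rfl (by omega) (by omega) (φ (e 1))] at h
    have h' := congrArg (fun z => b.repr z (⟨i, by omega⟩ : Fin n)) h
    simp only [map_smul, map_add, Finsupp.smul_apply, Finsupp.add_apply, smul_eq_mul] at h'
    rw [hrepr (i + 1) _ (by omega) (by omega), hrepr n _ (by omega) le_rfl,
      hC2 (i + 1) i (i - 1) (by omega) (by omega) (by omega) (by omega) (by omega) (by omega)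
        (φ (e i))] at h'
    have hidxi : ((⟨i, by omega⟩ : Fin n) : ℕ) = i := rfl
    rw [hidxi, if_pos rfl, if_neg (by omega), ← hd (i + 1) i rfl (by omega),
      ← hd i (i - 1) (by omega) (by omega), ← hα (by omega)] at h'
    rw [h']
    ring
  -- even/odd powers
  have hpow3 : ((-1 : ℂ)) ^ (3 : ℕ) = -1 := by norm_num
  have hpowN3 : ((-1 : ℂ)) ^ (n - 3) = 1 := Even.neg_one_pow ⟨t - 1, by omega⟩
  have hpowN2 : ((-1 : ℂ)) ^ (n - 2) = -1 := Odd.neg_one_pow ⟨t - 1, by omega⟩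
  -- E3 as a full vector identity
  have hEn : φ (e n) = (2⁻¹ * (d 3 + d (n - 3))) • e n := by
    have h3n3 : ⁅e 3, e (n - 3)⁆ = ((-1 : ℂ) ^ (3 : ℕ)) • e n := by
      rw [htab 3 (n - 3) (by omega) (by omega) (by omega), if_neg (by omega),
        if_pos ⟨by omega, by omega⟩]
    have h := hφ (e 3) (e (n - 3))
    rw [h3n3, map_smul, hbrkt (n - 3) 2 (by omega) (by omega) (by omega) (by omega) (by omega)
      (φ (e 3)), ← lie_skew (e 3) (φ (e (n - 3))),
      hbrkt 3 (n - 4) (by omega) (by omega) (by omega) (by omega) (by omega) (φ (e (n - 3)))] at h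
    rw [show n - (n - 3) = 3 by omega, hF1 3 (by omega) (by omega) _,
      hF1 (n - 3) (by omega) (by omega) _, ← hd 3 2 rfl (by omega),
      ← hd (n - 3) (n - 4) (by omega) (by omega), hpow3, hpowN3] at h
    apply smul_right_injective L (show (-1 : ℂ) ≠ 0 by norm_num)
    show (-1 : ℂ) • φ (e n) = (-1 : ℂ) • ((2⁻¹ * (d 3 + d (n - 3))) • e n)
    rw [h]
    module
  -- E2, coefficient at e_n
  have heq : d 2 + d (n - 2) = d 3 + d (n - 3) := by
    have h2n2 : ⁅e 2, e (n - 2)⁆ = ((-1 : ℂ) ^ (2 : ℕ)) • e n := by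
      rw [htab 2 (n - 2) (by omega) (by omega) (by omega), if_neg (by omega),
        if_pos ⟨by omega, by omega⟩]
    have h := hφ (e 2) (e (n - 2))
    rw [h2n2, map_smul, hbrkt (n - 2) 1 (by omega) (by omega) (by omega) (by omega) (by omega)
      (φ (e 2)), ← lie_skew (e 2) (φ (e (n - 2))),
      hbrkt 2 (n - 3) (by omega) (by omega) (by omega) (by omega) (by omega) (φ (e (n - 2)))] at h
    rw [show n - (n - 2) = 2 by omega, ← hd 2 1 rfl (by omega),
      ← hd (n - 2) (n - 3) (by omega) (by omega), hpowN2] at h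
    have h' := congrArg (fun z => b.repr z (⟨n - 1, by omega⟩ : Fin n)) h
    simp only [map_smul, map_add, map_neg, Finsupp.smul_apply, Finsupp.add_apply,
      Finsupp.neg_apply, smul_eq_mul] at h'
    rw [hrepr (n - 2 + 1) _ (by omega) (by omega), hrepr n _ (by omega) le_rfl,
      hrepr (2 + 1) _ (by omega) (by omega)] at h'
    have hidx : ((⟨n - 1, by omega⟩ : Fin n) : ℕ) = n - 1 := rfl
    rw [hidx, if_neg (by omega), if_pos (by omega), if_neg (by omega)] at h'
    have h'' := congrArg (fun z => b.repr z (⟨n - 1, by omega⟩ : Fin n)) hEn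
    simp only [map_smul, Finsupp.smul_apply, smul_eq_mul] at h''
    simp only [hrepr n _ (by omega) le_rfl, hidx] at h''
    rw [if_pos (show n = n - 1 + 1 by omega)] at h''
    rw [h''] at h'
    have h2ne : (2 : ℂ) ≠ 0 := two_ne_zero
    field_simp at h'
    linear_combination -h'
  -- closed form
  have hF3 : ∀ m : ℕ, 2 + m ≤ n - 1 → d (2 + m) = α + (d 2 - α) * (2 : ℂ)⁻¹ ^ m := by
    intro m
    induction m with
    | zero => intro _; simp
    | succ k ih =>
      intro hk
      have h1 := ih (by omega)
      have h2 := hF2 (2 + k) (by omega) (by omega)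
      show d ((2 + k) + 1) = _
      rw [h2, h1]
      ring
  have e3' : d 3 = α + (d 2 - α) * (2 : ℂ)⁻¹ ^ (1 : ℕ) := hF3 1 (by omega)
  have en2 : d (n - 2) = α + (d 2 - α) * (2 : ℂ)⁻¹ ^ (n - 4) := by
    have := hF3 (n - 4) (by omega)
    rw [show 2 + (n - 4) = n - 2 by omega] at this
    exact this
  have en3 : d (n - 3) = α + (d 2 - α) * (2 : ℂ)⁻¹ ^ (n - 5) := by
    have := hF3 (n - 5) (by omega)
    rw [show 2 + (n - 5) = n - 3 by omega] at this
    exact this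
  -- deduce d 2 = α
  have hc : d 2 - α = 0 := by
    have hps : (2 : ℂ)⁻¹ ^ (n - 4) = 2⁻¹ * 2⁻¹ ^ (n - 5) := by
      rw [← pow_succ']
      congr 1
      omega
    have key : (d 2 - α) * ((1 - (2 : ℂ)⁻¹) * (1 - 2⁻¹ ^ (n - 5))) = 0 := by
      rw [en2, en3, e3', hps] at heq
      linear_combination heq
    rcases mul_eq_zero.mp key with h | h
    · exact h
    · exfalso
      rcases mul_eq_zero.mp h with h' | h'
      · rw [sub_eq_zero] at h'
        norm_num at h'
      · rw [sub_eq_zero] at h'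
        have h1 : ((2 : ℂ)) ^ (n - 5) = 1 := by
          have h6 : ((2 : ℂ) ^ (n - 5))⁻¹ = 1 := by rw [← inv_pow]; exact h'.symm
          rwa [inv_eq_one] at h6
        have h2 : ((2 ^ (n - 5) : ℕ) : ℂ) = ((1 : ℕ) : ℂ) := by push_cast; rw [h1]
        have h3 : (2 : ℕ) ^ (n - 5) = 1 := Nat.cast_injective h2
        have h4 : n - 5 ≠ 0 := by omega
        have h5 : 1 < (2 : ℕ) ^ (n - 5) := Nat.one_lt_two_pow h4
        omega
  have hd3 : d 3 = α := by rw [e3', hc]; ring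
  have hdn3 : d (n - 3) = α := by rw [en3, hc]; ring
  rw [hEn, hd3, hdn3, show (2 : ℂ)⁻¹ * (α + α) = α by ring, ← hα (by omega)]
end

section
/- Let g = g^1_{(5,1)} be the 5-dimensional complex Lie algebra with basis e_1,…,e_5 and nonzero brackets [e_1,e_2] = e_3, [e_1,e_3] = e_4, [e_2,e_3] = e_5. A linear map φ : g → g is a 1/2-derivation of g if and only if there exist scalars α_1,…,α_5, β_1,…,β_5 such that φ(e_1) = Σ α_i e_i, φ(e_2) = Σ β_i e_i, φ(e_3) = (1/2)(α_1+β_2)e_3 + (1/2)β_3 e_4 − (1/2)α_3 e_5, φ(e_4) = (1/4)(3α_1+β_2)e_4 + (1/2)α_2 e_5, φ(e_5) = (1/2)β_1 e_4 + (1/4)(α_1+3β_2)e_5. -/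
private lemma sum_Icc15 {M : Type*} [AddCommMonoid M] (f : ℕ → M) :
    ∑ i ∈ Finset.Icc 1 5, f i = f 1 + f 2 + f 3 + f 4 + f 5 := by
  show ∑ i ∈ ({1,2,3,4,5} : Finset ℕ), f i = _
  simp [Finset.sum_insert, add_assoc]

/-- Description of all 1/2-derivations of the 5-dimensional algebra g^1_{(5,1)}. -/
theorem g151_half_derivations
    (L : Type*) [LieRing L] [LieAlgebra ℂ L]
    (e : ℕ → L) (b : Module.Basis (Fin 5) ℂ L)
    (hb : ∀ i : Fin 5, e (i.1 + 1) = b i)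
    (h12 : ⁅e 1, e 2⁆ = e 3) (h13 : ⁅e 1, e 3⁆ = e 4) (h23 : ⁅e 2, e 3⁆ = e 5)
    (hz : ∀ i j : ℕ, 1 ≤ i → i < j → j ≤ 5 →
      ¬(i = 1 ∧ j = 2) → ¬(i = 1 ∧ j = 3) → ¬(i = 2 ∧ j = 3) → ⁅e i, e j⁆ = 0)
    (φ : L →ₗ[ℂ] L) :
    (∀ x y : L, φ ⁅x, y⁆ = (2 : ℂ)⁻¹ • (⁅φ x, y⁆ + ⁅x, φ y⁆)) ↔
    (∃ α β : ℕ → ℂ,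
      φ (e 1) = ∑ i ∈ Finset.Icc 1 5, α i • e i ∧
      φ (e 2) = ∑ i ∈ Finset.Icc 1 5, β i • e i ∧
      φ (e 3) = ((1 / 2 : ℂ) * (α 1 + β 2)) • e 3 + ((1 / 2 : ℂ) * β 3) • e 4
        + (-(1 / 2 : ℂ) * α 3) • e 5 ∧
      φ (e 4) = ((1 / 4 : ℂ) * (3 * α 1 + β 2)) • e 4 + ((1 / 2 : ℂ) * α 2) • e 5 ∧
      φ (e 5) = ((1 / 2 : ℂ) * β 1) • e 4 + ((1 / 4 : ℂ) * (α 1 + 3 * β 2)) • e 5) := by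
  have z14 : ⁅e 1, e 4⁆ = 0 := hz 1 4 (by norm_num) (by norm_num) (by norm_num) (by simp) (by simp) (by simp)
  have z15 : ⁅e 1, e 5⁆ = 0 := hz 1 5 (by norm_num) (by norm_num) (by norm_num) (by simp) (by simp) (by simp)
  have z24 : ⁅e 2, e 4⁆ = 0 := hz 2 4 (by norm_num) (by norm_num) (by norm_num) (by simp) (by simp) (by simp)
  have z25 : ⁅e 2, e 5⁆ = 0 := hz 2 5 (by norm_num) (by norm_num) (by norm_num) (by simp) (by simp) (by simp)
  have z34 : ⁅e 3, e 4⁆ = 0 := hz 3 4 (by norm_num) (by norm_num) (by norm_num) (by simp) (by simp) (by simp)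
  have z35 : ⁅e 3, e 5⁆ = 0 := hz 3 5 (by norm_num) (by norm_num) (by norm_num) (by simp) (by simp) (by simp)
  have z45 : ⁅e 4, e 5⁆ = 0 := hz 4 5 (by norm_num) (by norm_num) (by norm_num) (by simp) (by simp) (by simp)
  have s21 : ⁅e 2, e 1⁆ = -e 3 := by rw [← lie_skew, h12]
  have s31 : ⁅e 3, e 1⁆ = -e 4 := by rw [← lie_skew, h13]
  have s32 : ⁅e 3, e 2⁆ = -e 5 := by rw [← lie_skew, h23]
  have s41 : ⁅e 4, e 1⁆ = 0 := by rw [← lie_skew, z14, neg_zero]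
  have s51 : ⁅e 5, e 1⁆ = 0 := by rw [← lie_skew, z15, neg_zero]
  have s42 : ⁅e 4, e 2⁆ = 0 := by rw [← lie_skew, z24, neg_zero]
  have s52 : ⁅e 5, e 2⁆ = 0 := by rw [← lie_skew, z25, neg_zero]
  have s43 : ⁅e 4, e 3⁆ = 0 := by rw [← lie_skew, z34, neg_zero]
  have s53 : ⁅e 5, e 3⁆ = 0 := by rw [← lie_skew, z35, neg_zero]
  have s54 : ⁅e 5, e 4⁆ = 0 := by rw [← lie_skew, z45, neg_zero]
  have eb1 : e 1 = b 0 := hb 0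
  have eb2 : e 2 = b 1 := hb 1
  have eb3 : e 3 = b 2 := hb 2
  have eb4 : e 4 = b 3 := hb 3
  have eb5 : e 5 = b 4 := hb 4
  constructor
  · intro hφ
    have hE1 : φ (e 1) = b.repr (φ (e 1)) 0 • e 1 + b.repr (φ (e 1)) 1 • e 2
        + b.repr (φ (e 1)) 2 • e 3 + b.repr (φ (e 1)) 3 • e 4 + b.repr (φ (e 1)) 4 • e 5 := by
      simp only [eb1, eb2, eb3, eb4, eb5]
      conv_lhs => rw [← b.sum_repr (φ (b 0))]
      rw [Fin.sum_univ_five]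
    have hE2 : φ (e 2) = b.repr (φ (e 2)) 0 • e 1 + b.repr (φ (e 2)) 1 • e 2
        + b.repr (φ (e 2)) 2 • e 3 + b.repr (φ (e 2)) 3 • e 4 + b.repr (φ (e 2)) 4 • e 5 := by
      simp only [eb1, eb2, eb3, eb4, eb5]
      conv_lhs => rw [← b.sum_repr (φ (b 1))]
      rw [Fin.sum_univ_five]
    set r : Fin 5 →₀ ℂ := b.repr (φ (e 1)) with hr
    set s : Fin 5 →₀ ℂ := b.repr (φ (e 2)) with hs
    have hE3 : φ (e 3) = ((1 / 2 : ℂ) * (r 0 + s 1)) • e 3 + ((1 / 2 : ℂ) * s 2) • e 4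
        + (-(1 / 2 : ℂ) * r 2) • e 5 := by
      have h := hφ (e 1) (e 2)
      rw [h12, hE1, hE2] at h
      simp only [add_lie, lie_add, smul_lie, lie_smul, lie_self, h12, h13, h23, z14, z15,
        z24, z25, s21, s31, s32, s41, s51, s42, s52, smul_zero, add_zero, zero_add,
        smul_neg] at h
      rw [h]; module
    have hE4 : φ (e 4) = ((1 / 4 : ℂ) * (3 * r 0 + s 1)) • e 4 + ((1 / 2 : ℂ) * r 1) • e 5 := by
      have h := hφ (e 1) (e 3)
      rw [h13, hE1, hE3] at h
      simp only [add_lie, lie_add, smul_lie, lie_smul, lie_self, h12, h13, h23, z14, z15,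
        z24, z25, z34, z35, s21, s31, s32, s41, s51, s42, s52, s43, s53, smul_zero,
        add_zero, zero_add, smul_neg] at h
      rw [h]; module
    have hE5 : φ (e 5) = ((1 / 2 : ℂ) * s 0) • e 4 + ((1 / 4 : ℂ) * (r 0 + 3 * s 1)) • e 5 := by
      have h := hφ (e 2) (e 3)
      rw [h23, hE2, hE3] at h
      simp only [add_lie, lie_add, smul_lie, lie_smul, lie_self, h12, h13, h23, z14, z15,
        z24, z25, z34, z35, s21, s31, s32, s41, s51, s42, s52, s43, s53, smul_zero,
        add_zero, zero_add, smul_neg] at h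
      rw [h]; module
    refine ⟨fun n => if n = 1 then r 0 else if n = 2 then r 1 else if n = 3 then r 2
        else if n = 4 then r 3 else r 4,
      fun n => if n = 1 then s 0 else if n = 2 then s 1 else if n = 3 then s 2
        else if n = 4 then s 3 else s 4, ?_, ?_, ?_, ?_, ?_⟩
    · rw [sum_Icc15, hE1]; norm_num
    · rw [sum_Icc15, hE2]; norm_num
    · rw [hE3]; norm_num
    · rw [hE4]; norm_num
    · rw [hE5]; norm_num
  · rintro ⟨α, β, hE1, hE2, hE3, hE4, hE5⟩
    rw [sum_Icc15] at hE1 hE2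
    set D : L →ₗ[ℂ] L →ₗ[ℂ] L := LinearMap.mk₂ ℂ
      (fun x y => φ ⁅x, y⁆ - (2 : ℂ)⁻¹ • (⁅φ x, y⁆ + ⁅x, φ y⁆))
      (fun x x' y => by simp only [add_lie, lie_add, map_add]; module)
      (fun c x y => by simp only [smul_lie, lie_smul, map_smul]; module)
      (fun x y y' => by simp only [add_lie, lie_add, map_add]; module)
      (fun c x y => by simp only [smul_lie, lie_smul, map_smul]; module)
      with hDdef
    have hDa : ∀ x y : L, D x y = φ ⁅x, y⁆ - (2 : ℂ)⁻¹ • (⁅φ x, y⁆ + ⁅x, φ y⁆) :=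
      fun x y => rfl
    have hD : D = 0 := by
      refine LinearMap.ext_basis b b fun i j => ?_
      rw [LinearMap.zero_apply, LinearMap.zero_apply, hDa, sub_eq_zero]
      have f0 : ∀ (h : 0 < 5), (⟨0, h⟩ : Fin 5) = 0 := fun _ => rfl
      have f1 : ∀ (h : 1 < 5), (⟨1, h⟩ : Fin 5) = 1 := fun _ => rfl
      have f2 : ∀ (h : 2 < 5), (⟨2, h⟩ : Fin 5) = 2 := fun _ => rfl
      have f3 : ∀ (h : 3 < 5), (⟨3, h⟩ : Fin 5) = 3 := fun _ => rfl
      have f4 : ∀ (h : 4 < 5), (⟨4, h⟩ : Fin 5) = 4 := fun _ => rfl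
      fin_cases i <;> fin_cases j <;>
        simp only [f0, f1, f2, f3, f4, ← eb1, ← eb2, ← eb3, ← eb4, ← eb5] <;>
        · simp only [h12, h13, h23, z14, z15, z24, z25, z34, z35, z45, s21, s31, s32, s41,
            s51, s42, s52, s43, s53, s54, lie_self, hE1, hE2, hE3, hE4, hE5, add_lie,
            lie_add, smul_lie, lie_smul, lie_zero, zero_lie, map_zero, map_add, map_smul,
            map_neg, smul_zero, add_zero, zero_add, smul_neg, neg_zero, neg_lie, lie_neg]
          try module
          try simp
    intro x y
    have h : D x y = 0 := by rw [hD]; rfl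
    rw [hDa, sub_eq_zero] at h
    exact h
end

section
/- Let n ≥ 7 and let g = g^2_{(n,1)} be the complex Lie algebra with basis e_1,…,e_n and nonzero brackets [e_1,e_i] = e_{i+1} for 2 ≤ i ≤ n−2 and [e_i,e_n] = e_{i+2} for 2 ≤ i ≤ n−3. A linear map φ : g → g is a 1/2-derivation of g if and only if there exist scalars α_1,…,α_{n−1}, β_{n−2}, β_{n−1}, γ_{n−1} such that φ(e_1) = Σ_{i=1}^{n−1} α_i e_i, φ(e_2) = α_1 e_2 + β_{n−2} e_{n−2} + β_{n−1} e_{n−1}, φ(e_3) = α_1 e_3 + (1/2)β_{n−2} e_{n−1}, φ(e_i) = α_1 e_i for 4 ≤ i ≤ n−1, and φ(e_n) = −Σ_{i=3}^{n−2} α_{i−1} e_i + γ_{n−1} e_{n−1} + α_1 e_n. -/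
open Finset

namespace G2n1

set_option linter.unusedSectionVars false
variable {n : ℕ} {L : Type*} [LieRing L] [LieAlgebra ℂ L]

lemma lie_sum' {ι : Type*} (x : L) (s : Finset ι) (f : ι → L) :
    ⁅x, ∑ i ∈ s, f i⁆ = ∑ i ∈ s, ⁅x, f i⁆ := by
  classical
  induction s using Finset.induction with
  | empty => simp
  | insert _ _ h ih => simp [Finset.sum_insert h, lie_add, ih]

lemma sum_lie' {ι : Type*} (x : L) (s : Finset ι) (f : ι → L) :
    ⁅∑ i ∈ s, f i, x⁆ = ∑ i ∈ s, ⁅f i, x⁆ := by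
  classical
  induction s using Finset.induction with
  | empty => simp
  | insert _ _ h ih => simp [Finset.sum_insert h, add_lie, ih]

noncomputable def co (b : Module.Basis (Fin n) ℂ L) (k : ℕ) (x : L) : ℂ :=
  if h : k - 1 < n then b.repr x ⟨k - 1, h⟩ else 0

lemma co_add (b : Module.Basis (Fin n) ℂ L) (k : ℕ) (x y : L) :
    co b k (x + y) = co b k x + co b k y := by
  unfold co; split <;> simp

lemma co_sub (b : Module.Basis (Fin n) ℂ L) (k : ℕ) (x y : L) :
    co b k (x - y) = co b k x - co b k y := by
  unfold co; split <;> simp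

lemma co_smul (b : Module.Basis (Fin n) ℂ L) (k : ℕ) (r : ℂ) (x : L) :
    co b k (r • x) = r * co b k x := by
  unfold co; split <;> simp

lemma co_zero (b : Module.Basis (Fin n) ℂ L) (k : ℕ) : co b k (0 : L) = 0 := by
  unfold co; split <;> simp

lemma co_neg (b : Module.Basis (Fin n) ℂ L) (k : ℕ) (x : L) : co b k (-x) = - co b k x := by
  unfold co; split <;> simp

lemma co_sum (b : Module.Basis (Fin n) ℂ L) {ι : Type*} (s : Finset ι) (f : ι → L) (k : ℕ) :
    co b k (∑ i ∈ s, f i) = ∑ i ∈ s, co b k (f i) := by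
  unfold co; split <;> simp

lemma sum_Icc_one {M : Type*} [AddCommMonoid M] (f : ℕ → M) :
    ∑ k ∈ Icc 1 n, f k = ∑ i : Fin n, f (i.1 + 1) := by
  rw [← Finset.Ico_add_one_right_eq_Icc, Finset.sum_Ico_eq_sum_range]
  rw [Fin.sum_univ_eq_sum_range (fun i => f (i + 1))]
  simp [add_comm]

variable {e : ℕ → L} {b : Module.Basis (Fin n) ℂ L}

lemma e_eq (hb : ∀ i : Fin n, e (i.1 + 1) = b i) {k : ℕ} (h1 : 1 ≤ k) (h2 : k ≤ n) :
    e k = b ⟨k - 1, by omega⟩ := by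
  have := hb ⟨k - 1, by omega⟩
  simpa [Nat.sub_add_cancel h1] using this

lemma co_e (hb : ∀ i : Fin n, e (i.1 + 1) = b i) {k m : ℕ}
    (hk1 : 1 ≤ k) (hk2 : k ≤ n) (hm1 : 1 ≤ m) (hm2 : m ≤ n) :
    co b k (e m) = if m = k then 1 else 0 := by
  rw [e_eq hb hm1 hm2]
  unfold co
  rw [dif_pos (by omega : k - 1 < n)]
  rw [b.repr_self]
  rw [Finsupp.single_apply]
  by_cases h : m = k
  · rw [if_pos (by simp [Fin.ext_iff]; omega), if_pos h]
  · rw [if_neg (by simp [Fin.ext_iff]; omega), if_neg h]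

lemma expand (hb : ∀ i : Fin n, e (i.1 + 1) = b i) (x : L) :
    x = ∑ k ∈ Icc 1 n, co b k x • e k := by
  rw [sum_Icc_one (fun k => co b k x • e k)]
  have : ∀ i : Fin n, co b (i.1 + 1) x • e (i.1 + 1) = b.repr x i • b i := by
    intro i
    rw [hb i]
    congr 1
    unfold co
    rw [dif_pos (by omega : i.1 + 1 - 1 < n)]
    have h2 : (⟨i.1 + 1 - 1, by omega⟩ : Fin n) = i := by ext; simp
    rw [h2]
  rw [Finset.sum_congr rfl (fun i _ => this i)]
  exact (b.sum_repr x).symm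

lemma co_sum_smul_e (hb : ∀ i : Fin n, e (i.1 + 1) = b i) (S : Finset ℕ) (f : ℕ → ℂ)
    (g : ℕ → ℕ) (hS : ∀ k ∈ S, 1 ≤ g k ∧ g k ≤ n) {m : ℕ} (hm1 : 1 ≤ m) (hm2 : m ≤ n) :
    co b m (∑ k ∈ S, f k • e (g k)) = ∑ k ∈ S, if g k = m then f k else 0 := by
  rw [co_sum]
  refine Finset.sum_congr rfl fun k hk => ?_
  rw [co_smul, co_e hb hm1 hm2 (hS k hk).1 (hS k hk).2]
  by_cases h : g k = m <;> simp [h]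

lemma sum_ind (f : ℕ → ℂ) (p q d m : ℕ) :
    (∑ k ∈ Icc p q, if k + d = m then f k else 0)
      = if p + d ≤ m ∧ m ≤ q + d then f (m - d) else 0 := by
  split_ifs with hc
  · rw [Finset.sum_eq_single_of_mem (m - d) (by simp only [mem_Icc]; omega)
      (fun k hk hne => by simp only [mem_Icc] at hk; rw [if_neg (by omega)])]
    rw [if_pos (by omega)]
  · apply Finset.sum_eq_zero
    intro k hk
    simp only [mem_Icc] at hk
    rw [if_neg (by omega)]


section Table

variable (hn : 7 ≤ n)
variable (htab : ∀ i j : ℕ, 1 ≤ i → i < j → j ≤ n →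
      ⁅e i, e j⁆ =
        if i = 1 ∧ 2 ≤ j ∧ j ≤ n - 2 then e (j + 1)
        else if j = n ∧ 2 ≤ i ∧ i ≤ n - 3 then e (i + 2)
        else 0)
include hn htab

lemma br1 {j : ℕ} (h2 : 2 ≤ j) (h3 : j ≤ n - 2) : ⁅e 1, e j⁆ = e (j + 1) := by
  rw [htab 1 j (by omega) (by omega) (by omega), if_pos ⟨rfl, h2, h3⟩]

lemma brn {i : ℕ} (h2 : 2 ≤ i) (h3 : i ≤ n - 3) : ⁅e i, e n⁆ = e (i + 2) := by
  rw [htab i n (by omega) (by omega) (by omega), if_neg (by omega), if_pos ⟨rfl, h2, h3⟩]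

lemma br0 {i j : ℕ} (hi1 : 1 ≤ i) (hin : i ≤ n) (hj1 : 1 ≤ j) (hjn : j ≤ n)
    (c1 : ¬(i = 1 ∧ 2 ≤ j ∧ j ≤ n - 2)) (c2 : ¬(j = 1 ∧ 2 ≤ i ∧ i ≤ n - 2))
    (c3 : ¬(j = n ∧ 2 ≤ i ∧ i ≤ n - 3)) (c4 : ¬(i = n ∧ 2 ≤ j ∧ j ≤ n - 3)) :
    ⁅e i, e j⁆ = 0 := by
  rcases lt_trichotomy i j with h | h | h
  · rw [htab i j hi1 h hjn, if_neg c1, if_neg c3]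
  · rw [h, lie_self]
  · rw [← lie_skew, htab j i hj1 h hin, if_neg c2, if_neg c4, neg_zero]

variable (hb : ∀ i : Fin n, e (i.1 + 1) = b i)
include hb

lemma lie_e1_x (x : L) : ⁅e 1, x⁆ = ∑ k ∈ Icc 2 (n - 2), co b k x • e (k + 1) := by
  conv_lhs => rw [expand hb x]
  rw [lie_sum']
  simp only [lie_smul]
  rw [← Finset.sum_subset (by intro k hk; simp only [mem_Icc] at *; omega :
      Icc 2 (n - 2) ⊆ Icc 1 n)
    (fun k hk hk2 => by
      simp only [mem_Icc] at hk hk2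
      rw [br0 hn htab (by omega) (by omega) hk.1 hk.2 (by omega) (by omega) (by omega)
        (by omega), smul_zero])]
  refine Finset.sum_congr rfl fun k hk => ?_
  simp only [mem_Icc] at hk
  rw [br1 hn htab hk.1 hk.2]

lemma lie_x_en (x : L) : ⁅x, e n⁆ = ∑ k ∈ Icc 2 (n - 3), co b k x • e (k + 2) := by
  conv_lhs => rw [expand hb x]
  rw [sum_lie']
  simp only [smul_lie]
  rw [← Finset.sum_subset (by intro k hk; simp only [mem_Icc] at *; omega :
      Icc 2 (n - 3) ⊆ Icc 1 n)
    (fun k hk hk2 => by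
      simp only [mem_Icc] at hk hk2
      rw [br0 hn htab hk.1 hk.2 (by omega) (by omega) (by omega) (by omega) (by omega)
        (by omega), smul_zero])]
  refine Finset.sum_congr rfl fun k hk => ?_
  simp only [mem_Icc] at hk
  rw [brn hn htab hk.1 hk.2]

lemma lie_x_ej {j : ℕ} (h2 : 2 ≤ j) (h3 : j ≤ n - 1) (x : L) :
    ⁅x, e j⁆ = (if j ≤ n - 2 then co b 1 x • e (j + 1) else 0)
      - (if j ≤ n - 3 then co b n x • e (j + 2) else 0) := by
  conv_lhs => rw [expand hb x]
  rw [sum_lie']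
  simp only [smul_lie]
  rw [← Finset.sum_subset (by intro k hk; simp only [mem_insert, mem_singleton, mem_Icc] at *; omega :
      ({1, n} : Finset ℕ) ⊆ Icc 1 n)
    (fun k hk hk2 => by
      simp only [mem_Icc] at hk
      simp only [mem_insert, mem_singleton] at hk2
      rw [br0 hn htab hk.1 hk.2 (by omega) (by omega) (by omega) (by omega) (by omega)
        (by omega), smul_zero])]
  rw [Finset.sum_pair (by omega : (1 : ℕ) ≠ n)]
  have hA : co b 1 x • ⁅e 1, e j⁆ = (if j ≤ n - 2 then co b 1 x • e (j + 1) else 0) := by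
    by_cases h : j ≤ n - 2
    · rw [if_pos h, br1 hn htab h2 h]
    · rw [if_neg h, br0 hn htab (by omega) (by omega) (by omega) (by omega) (by omega)
        (by omega) (by omega) (by omega), smul_zero]
  have hB : co b n x • ⁅e n, e j⁆ = -(if j ≤ n - 3 then co b n x • e (j + 2) else 0) := by
    by_cases h : j ≤ n - 3
    · rw [if_pos h, ← lie_skew, brn hn htab h2 h, smul_neg]
    · rw [if_neg h, br0 hn htab (by omega) (by omega) (by omega) (by omega) (by omega)
        (by omega) (by omega) (by omega), smul_zero, neg_zero]
  rw [hA, hB, ← sub_eq_add_neg]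


variable (φ : L →ₗ[ℂ] L)

set_option maxHeartbeats 1600000 in
lemma forward
    (h : ∀ x y : L, φ ⁅x, y⁆ = (2 : ℂ)⁻¹ • (⁅φ x, y⁆ + ⁅x, φ y⁆)) :
    (∃ (α β : ℕ → ℂ) (γ : ℂ),
      φ (e 1) = ∑ i ∈ Finset.Icc 1 (n - 1), α i • e i ∧
      φ (e 2) = α 1 • e 2 + β (n - 2) • e (n - 2) + β (n - 1) • e (n - 1) ∧
      φ (e 3) = α 1 • e 3 + ((1 / 2 : ℂ) * β (n - 2)) • e (n - 1) ∧
      (∀ i : ℕ, 4 ≤ i → i ≤ n - 1 → φ (e i) = α 1 • e i) ∧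
      φ (e n) = -(∑ i ∈ Finset.Icc 3 (n - 2), α (i - 1) • e i)
        + γ • e (n - 1) + α 1 • e n) := by
  set A : ℕ → ℕ → ℂ := fun k m => co b m (φ (e k)) with hA
  have EE : ∀ j, 2 ≤ j → j ≤ n - 2 → ∀ m, 1 ≤ m → m ≤ n →
      A (j + 1) m = (2 : ℂ)⁻¹ * ((A 1 1 * (if j + 1 = m then 1 else 0)
        - (if j ≤ n - 3 then A 1 n * (if j + 2 = m then 1 else 0) else 0))
        + (if 3 ≤ m ∧ m ≤ n - 1 then A j (m - 1) else 0)) := by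
    intro j hj1 hj2 m hm1 hm2
    have hE := h (e 1) (e j)
    rw [br1 hn htab hj1 hj2] at hE
    rw [lie_x_ej hn htab hb hj1 (by omega) (φ (e 1))] at hE
    rw [lie_e1_x hn htab hb (φ (e j))] at hE
    rw [if_pos hj2] at hE
    have hc := congrArg (co b m) hE
    rw [co_smul, co_add, co_sub] at hc
    rw [co_smul, co_e hb hm1 hm2 (by omega) (by omega)] at hc
    rw [apply_ite (co b m), co_zero, co_smul,
      co_e hb hm1 hm2 (by omega) (by omega)] at hc
    rw [co_sum_smul_e hb _ _ _ (fun k hk => by simp only [mem_Icc] at hk; omega) hm1 hm2] at hc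
    rw [sum_ind (fun k => co b k (φ (e j))) 2 (n - 2) 1 m] at hc
    rw [show 2 + 1 = 3 from rfl, show n - 2 + 1 = n - 1 by omega] at hc
    exact hc
  have FF : ∀ i, 2 ≤ i → i ≤ n - 3 → ∀ m, 1 ≤ m → m ≤ n →
      A (i + 2) m = (2 : ℂ)⁻¹ * ((if 4 ≤ m ∧ m ≤ n - 1 then A i (m - 2) else 0)
        + -(A n 1 * (if i + 1 = m then 1 else 0) - A n n * (if i + 2 = m then 1 else 0))) := by
    intro i hi1 hi2 m hm1 hm2
    have hE := h (e i) (e n)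
    rw [brn hn htab hi1 hi2] at hE
    rw [lie_x_en hn htab hb (φ (e i))] at hE
    rw [← lie_skew (e i) (φ (e n))] at hE
    rw [lie_x_ej hn htab hb hi1 (by omega) (φ (e n))] at hE
    rw [if_pos (by omega : i ≤ n - 2), if_pos hi2] at hE
    have hc := congrArg (co b m) hE
    rw [co_smul, co_add, co_neg, co_sub] at hc
    rw [co_smul, co_e hb hm1 hm2 (by omega) (by omega)] at hc
    rw [co_smul, co_e hb hm1 hm2 (by omega) (by omega)] at hc
    rw [co_sum_smul_e hb _ _ _ (fun k hk => by simp only [mem_Icc] at hk; omega) hm1 hm2] at hc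
    rw [sum_ind (fun k => co b k (φ (e i))) 2 (n - 3) 2 m] at hc
    rw [show 2 + 2 = 4 from rfl, show n - 3 + 2 = n - 1 by omega] at hc
    exact hc
  have Z1n1 : ∀ m, 1 ≤ m → m ≤ n →
      0 = (2 : ℂ)⁻¹ * (if 3 ≤ m ∧ m ≤ n - 1 then A (n - 1) (m - 1) else 0) := by
    intro m hm1 hm2
    have hE := h (e 1) (e (n - 1))
    rw [br0 hn htab (by omega) (by omega) (by omega) (by omega) (by omega) (by omega)
      (by omega) (by omega), map_zero] at hE
    rw [lie_x_ej hn htab hb (by omega) (by omega) (φ (e 1))] at hE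
    rw [if_neg (by omega : ¬ n - 1 ≤ n - 2), if_neg (by omega : ¬ n - 1 ≤ n - 3)] at hE
    rw [lie_e1_x hn htab hb (φ (e (n - 1)))] at hE
    have hc := congrArg (co b m) hE
    rw [co_zero, co_smul, co_add, co_sub] at hc
    rw [co_sum_smul_e hb _ _ _ (fun k hk => by simp only [mem_Icc] at hk; omega) hm1 hm2] at hc
    rw [sum_ind (fun k => co b k (φ (e (n - 1)))) 2 (n - 2) 1 m] at hc
    rw [show 2 + 1 = 3 from rfl, show n - 2 + 1 = n - 1 by omega] at hc
    rw [co_zero, sub_self, zero_add] at hc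
    exact hc
  have Z1n : ∀ m, 1 ≤ m → m ≤ n →
      0 = (2 : ℂ)⁻¹ * ((if 4 ≤ m ∧ m ≤ n - 1 then A 1 (m - 2) else 0)
        + (if 3 ≤ m ∧ m ≤ n - 1 then A n (m - 1) else 0)) := by
    intro m hm1 hm2
    have hE := h (e 1) (e n)
    rw [br0 hn htab (by omega) (by omega) (by omega) (by omega) (by omega) (by omega)
      (by omega) (by omega), map_zero] at hE
    rw [lie_x_en hn htab hb (φ (e 1))] at hE
    rw [lie_e1_x hn htab hb (φ (e n))] at hE
    have hc := congrArg (co b m) hE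
    rw [co_zero, co_smul, co_add] at hc
    rw [co_sum_smul_e hb _ _ _ (fun k hk => by simp only [mem_Icc] at hk; omega) hm1 hm2] at hc
    rw [co_sum_smul_e hb _ _ _ (fun k hk => by simp only [mem_Icc] at hk; omega) hm1 hm2] at hc
    rw [sum_ind (fun k => co b k (φ (e 1))) 2 (n - 3) 2 m] at hc
    rw [sum_ind (fun k => co b k (φ (e n))) 2 (n - 2) 1 m] at hc
    rw [show 2 + 2 = 4 from rfl, show n - 3 + 2 = n - 1 by omega,
      show 2 + 1 = 3 from rfl, show n - 2 + 1 = n - 1 by omega] at hc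
    exact hc
  have Z23 : ∀ m, 1 ≤ m → m ≤ n →
      0 = (2 : ℂ)⁻¹ * ((A 2 1 * (if 4 = m then 1 else 0) - A 2 n * (if 5 = m then 1 else 0))
        + -(A 3 1 * (if 3 = m then 1 else 0) - A 3 n * (if 4 = m then 1 else 0))) := by
    intro m hm1 hm2
    have hE := h (e 2) (e 3)
    rw [br0 hn htab (by omega) (by omega) (by omega) (by omega) (by omega) (by omega)
      (by omega) (by omega), map_zero] at hE
    rw [lie_x_ej hn htab hb (by omega) (by omega) (φ (e 2))] at hE
    rw [if_pos (by omega : 3 ≤ n - 2), if_pos (by omega : 3 ≤ n - 3)] at hE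
    rw [← lie_skew (e 2) (φ (e 3))] at hE
    rw [lie_x_ej hn htab hb (by omega) (by omega) (φ (e 3))] at hE
    rw [if_pos (by omega : 2 ≤ n - 2), if_pos (by omega : 2 ≤ n - 3)] at hE
    have hc := congrArg (co b m) hE
    rw [co_zero, co_smul, co_add, co_neg, co_sub, co_sub] at hc
    rw [co_smul, co_e hb hm1 hm2 (by omega) (by omega)] at hc
    rw [co_smul, co_e hb hm1 hm2 (by omega) (by omega)] at hc
    rw [co_smul, co_e hb hm1 hm2 (by omega) (by omega)] at hc
    rw [co_smul, co_e hb hm1 hm2 (by omega) (by omega)] at hc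
    exact hc
  have Z2n2 : ∀ m, 1 ≤ m → m ≤ n →
      0 = (2 : ℂ)⁻¹ * ((A 2 1 * (if n - 1 = m then 1 else 0))
        + -(A (n - 2) 1 * (if 3 = m then 1 else 0) - A (n - 2) n * (if 4 = m then 1 else 0))) := by
    intro m hm1 hm2
    have hE := h (e 2) (e (n - 2))
    rw [br0 hn htab (by omega) (by omega) (by omega) (by omega) (by omega) (by omega)
      (by omega) (by omega), map_zero] at hE
    rw [lie_x_ej hn htab hb (by omega) (by omega) (φ (e 2))] at hE
    rw [if_pos (by omega : n - 2 ≤ n - 2), if_neg (by omega : ¬ n - 2 ≤ n - 3), sub_zero,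
      show n - 2 + 1 = n - 1 by omega] at hE
    rw [← lie_skew (e 2) (φ (e (n - 2)))] at hE
    rw [lie_x_ej hn htab hb (by omega) (by omega) (φ (e (n - 2)))] at hE
    rw [if_pos (by omega : 2 ≤ n - 2), if_pos (by omega : 2 ≤ n - 3)] at hE
    have hc := congrArg (co b m) hE
    rw [co_zero, co_smul, co_add, co_neg, co_sub] at hc
    rw [co_smul, co_e hb hm1 hm2 (by omega) (by omega)] at hc
    rw [co_smul, co_e hb hm1 hm2 (by omega) (by omega)] at hc
    rw [co_smul, co_e hb hm1 hm2 (by omega) (by omega)] at hc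
    exact hc
  have Zn2n : ∀ m, 1 ≤ m → m ≤ n →
      0 = (2 : ℂ)⁻¹ * ((if 4 ≤ m ∧ m ≤ n - 1 then A (n - 2) (m - 2) else 0)
        + -(A n 1 * (if n - 1 = m then 1 else 0))) := by
    intro m hm1 hm2
    have hE := h (e (n - 2)) (e n)
    rw [br0 hn htab (by omega) (by omega) (by omega) (by omega) (by omega) (by omega)
      (by omega) (by omega), map_zero] at hE
    rw [lie_x_en hn htab hb (φ (e (n - 2)))] at hE
    rw [← lie_skew (e (n - 2)) (φ (e n))] at hE
    rw [lie_x_ej hn htab hb (by omega) (by omega) (φ (e n))] at hE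
    rw [if_pos (by omega : n - 2 ≤ n - 2), if_neg (by omega : ¬ n - 2 ≤ n - 3)] at hE
    have hc := congrArg (co b m) hE
    rw [co_zero, co_smul, co_add, co_neg, co_sub, co_zero, sub_zero] at hc
    rw [co_smul, co_e hb hm1 hm2 (by omega) (by omega)] at hc
    rw [co_sum_smul_e hb _ _ _ (fun k hk => by simp only [mem_Icc] at hk; omega) hm1 hm2] at hc
    rw [sum_ind (fun k => co b k (φ (e (n - 2)))) 2 (n - 3) 2 m] at hc
    rw [show 2 + 2 = 4 from rfl, show n - 3 + 2 = n - 1 by omega,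
      show n - 2 + 1 = n - 1 by omega] at hc
    exact hc
  have hcoA : ∀ k m : ℕ, co b m (φ (e k)) = A k m := fun _ _ => rfl
  clear_value A
  -- scalar facts
  have h31 : ∀ k, 3 ≤ k → k ≤ n - 1 → A k 1 = 0 := by
    intro k hk1 hk2
    have t := EE (k - 1) (by omega) (by omega) 1 (by omega) (by omega)
    rw [show k - 1 + 1 = k by omega] at t
    split_ifs at t <;> first | omega | linear_combination t
  have h32 : ∀ k, 3 ≤ k → k ≤ n - 1 → A k 2 = 0 := by
    intro k hk1 hk2
    have t := EE (k - 1) (by omega) (by omega) 2 (by omega) (by omega)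
    rw [show k - 1 + 1 = k by omega] at t
    split_ifs at t <;> first | omega | linear_combination t
  have h3n : ∀ k, 3 ≤ k → k ≤ n - 1 → A k n = 0 := by
    intro k hk1 hk2
    have t := EE (k - 1) (by omega) (by omega) n (by omega) (by omega)
    rw [show k - 1 + 1 = k by omega] at t
    split_ifs at t <;> first | omega | linear_combination t
  have hn1r : ∀ k, 2 ≤ k → k ≤ n - 2 → A (n - 1) k = 0 := by
    intro k hk1 hk2
    have t := Z1n1 (k + 1) (by omega) (by omega)
    rw [show k + 1 - 1 = k by omega] at t
    split_ifs at t <;> first | omega | linear_combination -2 * t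
  have hn2r : ∀ k, 2 ≤ k → k ≤ n - 3 → A (n - 2) k = 0 := by
    intro k hk1 hk2
    have t := EE (n - 2) (by omega) (by omega) (k + 1) (by omega) (by omega)
    rw [show n - 2 + 1 = n - 1 by omega, show k + 1 - 1 = k by omega] at t
    have t4 := hn1r (k + 1) (by omega) (by omega)
    split_ifs at t <;> first | omega | linear_combination -2 * t + 2 * t4
  have hnn1 : A n 1 = 0 := by
    have t := Zn2n (n - 1) (by omega) (by omega)
    rw [show n - 1 - 2 = n - 3 by omega] at t
    have tB := hn2r (n - 3) (by omega) (by omega)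
    split_ifs at t <;> first | omega | linear_combination 2 * t + tB
  have hn2c : A n 2 = 0 := by
    have t := Z1n 3 (by omega) (by omega)
    rw [show (3 : ℕ) - 1 = 2 by omega] at t
    split_ifs at t <;> first | omega | linear_combination -2 * t
  have hnk : ∀ k, 3 ≤ k → k ≤ n - 2 → A n k = -A 1 (k - 1) := by
    intro k hk1 hk2
    have t := Z1n (k + 1) (by omega) (by omega)
    rw [show k + 1 - 2 = k - 1 by omega, show k + 1 - 1 = k by omega] at t
    split_ifs at t <;> first | omega | linear_combination -2 * t
  have h21 : A 2 1 = 0 := by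
    have t := Z2n2 (n - 1) (by omega) (by omega)
    split_ifs at t <;> first | omega | linear_combination -2 * t
  have h2n : A 2 n = 0 := by
    have t := Z23 5 (by omega) (by omega)
    split_ifs at t <;> first | omega | linear_combination 2 * t
  have grid : ∀ j k, 2 ≤ j → j ≤ n - 3 → 2 ≤ k → k ≤ n - 3 → k ≠ j → k ≠ j + 1 →
      A j k = 0 := by
    intro j k hj1 hj2 hk1 hk2 hne1 hne2
    have t1 := FF j hj1 hj2 (k + 2) (by omega) (by omega)
    rw [show k + 2 - 2 = k by omega] at t1
    have t2 := EE (j + 1) (by omega) (by omega) (k + 2) (by omega) (by omega)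
    rw [show j + 1 + 1 = j + 2 by omega, show k + 2 - 1 = k + 1 by omega] at t2
    have t3 := EE j hj1 (by omega) (k + 1) (by omega) (by omega)
    rw [show k + 1 - 1 = k by omega] at t3
    split_ifs at t1 t2 t3 <;>
      first
        | omega
        | linear_combination -4 * t1 + 4 * t2 + 2 * t3
        | linear_combination -4 * t1 + 4 * t2 + 2 * t3 + 2 * hnn1
  have sE : ∀ j, 2 ≤ j → j ≤ n - 3 →
      A (j + 1) (j + 2) = (2 : ℂ)⁻¹ * (A j (j + 1) - A 1 n) := by
    intro j hj1 hj2
    have t := EE j hj1 (by omega) (j + 2) (by omega) (by omega)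
    rw [show j + 2 - 1 = j + 1 by omega] at t
    split_ifs at t <;> first | omega | linear_combination t
  have sF : ∀ j, 2 ≤ j → j ≤ n - 4 →
      A (j + 2) (j + 3) = (2 : ℂ)⁻¹ * A j (j + 1) := by
    intro j hj1 hj2
    have t := FF j hj1 (by omega) (j + 3) (by omega) (by omega)
    rw [show j + 3 - 2 = j + 1 by omega] at t
    split_ifs at t <;> first | omega | linear_combination t
  have hA1n : A 1 n = 0 := by
    have h1 := sE 2 (by omega) (by omega)
    have h3 := sE 4 (by omega) (by omega)
    have h4 := sF 2 (by omega) (by omega)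
    have h5 := sF 3 (by omega) (by omega)
    norm_num at h1 h3 h4 h5
    linear_combination -2 * h1 + 4 * h3 + 2 * h4 - 4 * h5
  have s0a : ∀ j, 2 ≤ j → j ≤ n - 4 → A j (j + 1) = 0 := by
    intro j hj1 hj2
    have h1 := sE j hj1 (by omega)
    have h2 := sE (j + 1) (by omega) (by omega)
    rw [show j + 1 + 1 = j + 2 by omega, show j + 1 + 2 = j + 3 by omega] at h2
    have h3 := sF j hj1 hj2
    linear_combination 2 * h1 + 4 * h2 - 4 * h3 - 3 * hA1n
  have s0b : A (n - 3) (n - 2) = 0 := by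
    have h1 := sE (n - 4) (by omega) (by omega)
    rw [show n - 4 + 1 = n - 3 by omega, show n - 4 + 2 = n - 2 by omega] at h1
    have h2 := s0a (n - 4) (by omega) (by omega)
    rw [show n - 4 + 1 = n - 3 by omega] at h2
    linear_combination h1 + (2:ℂ)⁻¹ * h2 - (2:ℂ)⁻¹ * hA1n
  have s0c : A (n - 2) (n - 1) = 0 := by
    have h1 := sE (n - 3) (by omega) (by omega)
    rw [show n - 3 + 1 = n - 2 by omega, show n - 3 + 2 = n - 1 by omega] at h1
    linear_combination h1 + (2:ℂ)⁻¹ * s0b - (2:ℂ)⁻¹ * hA1n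
  have s0 : ∀ j, 2 ≤ j → j ≤ n - 2 → A j (j + 1) = 0 := by
    intro j hj1 hj2
    rcases (by omega : j ≤ n - 4 ∨ j = n - 3 ∨ j = n - 2) with hc | hc | hc
    · exact s0a j hj1 hc
    · subst hc; rw [show n - 3 + 1 = n - 2 by omega]; exact s0b
    · subst hc; rw [show n - 2 + 1 = n - 1 by omega]; exact s0c
  have dE : ∀ j, 2 ≤ j → j ≤ n - 2 →
      A (j + 1) (j + 1) = (2 : ℂ)⁻¹ * (A 1 1 + A j j) := by
    intro j hj1 hj2
    have t := EE j hj1 hj2 (j + 1) (by omega) (by omega)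
    rw [show j + 1 - 1 = j by omega] at t
    split_ifs at t <;> first | omega | linear_combination t
  have dF : ∀ j, 2 ≤ j → j ≤ n - 3 →
      A (j + 2) (j + 2) = (2 : ℂ)⁻¹ * (A j j + A n n) := by
    intro j hj1 hj2
    have t := FF j hj1 hj2 (j + 2) (by omega) (by omega)
    rw [show j + 2 - 2 = j by omega] at t
    split_ifs at t <;> first | omega | linear_combination t
  have hmu : A n n = A 1 1 := by
    have h1 := dE 2 (by omega) (by omega)
    have h3 := dE 4 (by omega) (by omega)
    have h4 := dF 2 (by omega) (by omega)
    have h5 := dF 3 (by omega) (by omega)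
    norm_num at h1 h3 h4 h5
    linear_combination -2 * h1 + 4 * h3 + 2 * h4 - 4 * h5
  have da : ∀ j, 2 ≤ j → j ≤ n - 3 → A j j = A 1 1 := by
    intro j hj1 hj2
    have h1 := dE j hj1 (by omega)
    have h2 := dE (j + 1) (by omega) (by omega)
    rw [show j + 1 + 1 = j + 2 by omega] at h2
    have h3 := dF j hj1 hj2
    linear_combination 2 * h1 + 4 * h2 - 4 * h3 - 2 * hmu
  have db : A (n - 2) (n - 2) = A 1 1 := by
    have h1 := dE (n - 3) (by omega) (by omega)
    rw [show n - 3 + 1 = n - 2 by omega] at h1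
    linear_combination h1 + (2:ℂ)⁻¹ * da (n - 3) (by omega) (by omega)
  have dc : A (n - 1) (n - 1) = A 1 1 := by
    have h1 := dE (n - 2) (by omega) (by omega)
    rw [show n - 2 + 1 = n - 1 by omega] at h1
    linear_combination h1 + (2:ℂ)⁻¹ * db
  have ddiag : ∀ j, 2 ≤ j → j ≤ n - 1 → A j j = A 1 1 := by
    intro j hj1 hj2
    rcases (by omega : j ≤ n - 3 ∨ j = n - 2 ∨ j = n - 1) with hc | hc | hc
    · exact da j hj1 hc
    · subst hc; exact db
    · subst hc; exact dc
  have cn2 : ∀ k, 3 ≤ k → k ≤ n - 4 → A k (n - 2) = 0 := by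
    intro k hk1 hk2
    have t := EE (k - 1) (by omega) (by omega) (n - 2) (by omega) (by omega)
    rw [show k - 1 + 1 = k by omega, show n - 2 - 1 = n - 3 by omega] at t
    have tg := grid (k - 1) (n - 3) (by omega) (by omega) (by omega) (by omega)
      (by omega) (by omega)
    split_ifs at t <;> first | omega | linear_combination t + (2:ℂ)⁻¹ * tg
  have c3n1 : A 3 (n - 1) = (2 : ℂ)⁻¹ * A 2 (n - 2) := by
    have t := EE 2 (by omega) (by omega) (n - 1) (by omega) (by omega)
    rw [show n - 1 - 1 = n - 2 by omega] at t
    split_ifs at t <;> first | omega | linear_combination t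
  have cn1 : ∀ k, 4 ≤ k → k ≤ n - 3 → A k (n - 1) = 0 := by
    intro k hk1 hk2
    have t := EE (k - 1) (by omega) (by omega) (n - 1) (by omega) (by omega)
    rw [show k - 1 + 1 = k by omega, show n - 1 - 1 = n - 2 by omega] at t
    have tB := cn2 (k - 1) (by omega) (by omega)
    split_ifs at t <;> first | omega | linear_combination t + (2:ℂ)⁻¹ * tB
  have hrow2 : ∀ m, 1 ≤ m → m ≤ n → m ≠ 2 → m ≠ n - 2 → m ≠ n - 1 → A 2 m = 0 := by
    intro m hm1 hm2 hne1 hne2 hne3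
    rcases (by omega : m = 1 ∨ m = 3 ∨ (4 ≤ m ∧ m ≤ n - 3) ∨ m = n) with hc | hc | hc | hc
    · subst hc; exact h21
    · subst hc
      have := s0 2 (by omega) (by omega)
      norm_num at this
      exact this
    · exact grid 2 m (by omega) (by omega) (by omega) (by omega) (by omega) (by omega)
    · subst hc; exact h2n
  have hrow3 : ∀ m, 1 ≤ m → m ≤ n → m ≠ 3 → m ≠ n - 1 → A 3 m = 0 := by
    intro m hm1 hm2 hne1 hne2
    rcases (by omega : m = 1 ∨ m = 2 ∨ m = 4 ∨ (5 ≤ m ∧ m ≤ n - 3) ∨ m = n - 2 ∨ m = n)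
      with hc | hc | hc | hc | hc | hc
    · subst hc; exact h31 3 (by omega) (by omega)
    · subst hc; exact h32 3 (by omega) (by omega)
    · subst hc
      have := s0 3 (by omega) (by omega)
      norm_num at this
      exact this
    · exact grid 3 m (by omega) (by omega) (by omega) (by omega) (by omega) (by omega)
    · subst hc; exact cn2 3 (by omega) (by omega)
    · subst hc; exact h3n 3 (by omega) (by omega)
  have hrowk : ∀ k m, 4 ≤ k → k ≤ n - 1 → 1 ≤ m → m ≤ n → m ≠ k → A k m = 0 := by
    intro k m hk1 hk2 hm1 hm2 hne
    rcases (by omega : m = 1 ∨ m = 2 ∨ m = n ∨ (3 ≤ m ∧ m ≤ n - 1)) with hc | hc | hc | hc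
    · subst hc; exact h31 k (by omega) hk2
    · subst hc; exact h32 k (by omega) hk2
    · subst hc; exact h3n k (by omega) hk2
    · rcases (by omega : k ≤ n - 3 ∨ k = n - 2 ∨ k = n - 1) with hk | hk | hk
      · rcases (by omega : m = k + 1 ∨ m = n - 1 ∨ (m = n - 2 ∧ m ≠ k + 1)
            ∨ (3 ≤ m ∧ m ≤ n - 3 ∧ m ≠ k + 1)) with hm | hm | hm | hm
        · subst hm; exact s0 k (by omega) (by omega)
        · subst hm; exact cn1 k hk1 hk
        · rw [hm.1]; exact cn2 k (by omega) (by omega)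
        · exact grid k m (by omega) hk (by omega) (by omega) (by omega) (by omega)
      · subst hk
        rcases (by omega : m = n - 1 ∨ m ≤ n - 3) with hm | hm
        · subst hm; exact s0c
        · exact hn2r m (by omega) hm
      · subst hk
        exact hn1r m (by omega) (by omega)
  refine ⟨A 1, A 2, A n (n - 1), ?_, ?_, ?_, ?_, ?_⟩
  · rw [expand hb (φ (e 1))]
    simp only [hcoA]
    refine (Finset.sum_subset (fun x hx => by simp only [mem_Icc] at *; omega)
      (fun x hx hx2 => ?_)).symm
    simp only [mem_Icc] at hx hx2
    rw [show x = n by omega, hA1n, zero_smul]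
  · rw [expand hb (φ (e 2))]
    simp only [hcoA]
    have hss : ∑ k ∈ Icc 1 n, A 2 k • e k = ∑ k ∈ ({2, n - 2, n - 1} : Finset ℕ), A 2 k • e k := by
      refine (Finset.sum_subset (fun x hx => ?_) (fun x hx hx2 => ?_)).symm
      · simp only [mem_insert, mem_singleton] at hx
        simp only [mem_Icc]
        omega
      · simp only [mem_Icc] at hx
        simp only [mem_insert, mem_singleton] at hx2
        rw [hrow2 x hx.1 hx.2 (by omega) (by omega) (by omega), zero_smul]
    rw [hss, Finset.sum_insert (by simp only [mem_insert, mem_singleton]; omega),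
      Finset.sum_insert (by simp only [mem_singleton]; omega), Finset.sum_singleton,
      ddiag 2 (by omega) (by omega), ← add_assoc]
  · rw [expand hb (φ (e 3))]
    simp only [hcoA]
    have hss : ∑ k ∈ Icc 1 n, A 3 k • e k = ∑ k ∈ ({3, n - 1} : Finset ℕ), A 3 k • e k := by
      refine (Finset.sum_subset (fun x hx => ?_) (fun x hx hx2 => ?_)).symm
      · simp only [mem_insert, mem_singleton] at hx
        simp only [mem_Icc]
        omega
      · simp only [mem_Icc] at hx
        simp only [mem_insert, mem_singleton] at hx2
        rw [hrow3 x hx.1 hx.2 (by omega) (by omega), zero_smul]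
    rw [hss, Finset.sum_insert (by simp only [mem_singleton]; omega), Finset.sum_singleton,
      ddiag 3 (by omega) (by omega), c3n1, show (1 / 2 : ℂ) = (2 : ℂ)⁻¹ by norm_num]
  · intro i hi1 hi2
    rw [expand hb (φ (e i))]
    simp only [hcoA]
    have hss : ∑ k ∈ Icc 1 n, A i k • e k = ∑ k ∈ ({i} : Finset ℕ), A i k • e k := by
      refine (Finset.sum_subset (fun x hx => ?_) (fun x hx hx2 => ?_)).symm
      · simp only [mem_singleton] at hx
        simp only [mem_Icc]
        omega
      · simp only [mem_Icc] at hx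
        simp only [mem_singleton] at hx2
        rw [hrowk i x hi1 hi2 hx.1 hx.2 (by omega), zero_smul]
    rw [hss, Finset.sum_singleton, ddiag i (by omega) hi2]
  · rw [expand hb (φ (e n))]
    simp only [hcoA]
    have h1 : ∑ k ∈ Icc 1 n, A n k • e k = ∑ k ∈ Icc 3 n, A n k • e k := by
      refine (Finset.sum_subset (fun x hx => by simp only [mem_Icc] at *; omega)
        (fun x hx hx2 => ?_)).symm
      simp only [mem_Icc] at hx hx2
      rcases (by omega : x = 1 ∨ x = 2) with hc | hc
      · rw [hc, hnn1, zero_smul]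
      · rw [hc, hn2c, zero_smul]
    have h2 : ∑ k ∈ Ioc 2 (n - 2), A n k • e k + ∑ k ∈ Ioc (n - 2) n, A n k • e k
        = ∑ k ∈ Ioc 2 n, A n k • e k :=
      Finset.sum_Ioc_consecutive _ (by omega) (by omega)
    have h3 : Icc 3 n = Ioc 2 n := by ext x; simp only [mem_Icc, mem_Ioc]; omega
    have h4 : Icc 3 (n - 2) = Ioc 2 (n - 2) := by ext x; simp only [mem_Icc, mem_Ioc]; omega
    have h5 : Ioc (n - 2) n = {n - 1, n} := by
      ext x; simp only [mem_Ioc, mem_insert, mem_singleton]; omega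
    have h6 : ∑ k ∈ Ioc 2 (n - 2), A n k • e k = -(∑ i ∈ Icc 3 (n - 2), A 1 (i - 1) • e i) := by
      rw [h4, ← Finset.sum_neg_distrib]
      refine Finset.sum_congr rfl fun x hx => ?_
      simp only [mem_Ioc] at hx
      rw [hnk x (by omega) (by omega), neg_smul]
    rw [h1, h3, ← h2, h5, Finset.sum_pair (by omega : n - 1 ≠ n), hmu, h6, ← add_assoc]


set_option maxHeartbeats 1600000 in
lemma reverse (α β : ℕ → ℂ) (γ : ℂ)
    (h1 : φ (e 1) = ∑ i ∈ Finset.Icc 1 (n - 1), α i • e i)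
    (h2 : φ (e 2) = α 1 • e 2 + β (n - 2) • e (n - 2) + β (n - 1) • e (n - 1))
    (h3 : φ (e 3) = α 1 • e 3 + ((1 / 2 : ℂ) * β (n - 2)) • e (n - 1))
    (h4 : ∀ i : ℕ, 4 ≤ i → i ≤ n - 1 → φ (e i) = α 1 • e i)
    (h5 : φ (e n) = -(∑ i ∈ Finset.Icc 3 (n - 2), α (i - 1) • e i)
        + γ • e (n - 1) + α 1 • e n) :
    ∀ x y : L, φ ⁅x, y⁆ = (2 : ℂ)⁻¹ • (⁅φ x, y⁆ + ⁅x, φ y⁆) := by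
  have hmid : ∀ a c, 2 ≤ a → a ≤ n - 1 → 2 ≤ c → c ≤ n - 1 → ⁅e a, e c⁆ = 0 := by
    intro a c ha1 ha2 hc1 hc2
    exact br0 hn htab (by omega) (by omega) (by omega) (by omega) (by omega) (by omega)
      (by omega) (by omega)
  have hφmid : ∀ j, 2 ≤ j → j ≤ n - 1 → ∀ m, 2 ≤ m → m ≤ n - 1 → ⁅φ (e j), e m⁆ = 0 := by
    intro j hj1 hj2 m hm1 hm2
    rcases (by omega : j = 2 ∨ j = 3 ∨ (4 ≤ j ∧ j ≤ n - 1)) with hc | hc | hc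
    · subst hc
      rw [h2, add_lie, add_lie, smul_lie, smul_lie, smul_lie,
        hmid 2 m (by omega) (by omega) hm1 hm2, hmid (n - 2) m (by omega) (by omega) hm1 hm2,
        hmid (n - 1) m (by omega) (by omega) hm1 hm2]
      simp
    · subst hc
      rw [h3, add_lie, smul_lie, smul_lie,
        hmid 3 m (by omega) (by omega) hm1 hm2, hmid (n - 1) m (by omega) (by omega) hm1 hm2]
      simp
    · rw [h4 j hc.1 hc.2, smul_lie, hmid j m (by omega) (by omega) hm1 hm2, smul_zero]
  have hφ1j : ∀ m, 2 ≤ m → m ≤ n - 1 → ⁅φ (e 1), e m⁆ = α 1 • ⁅e 1, e m⁆ := by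
    intro m hm1 hm2
    rw [h1, sum_lie']
    rw [Finset.sum_eq_single_of_mem 1 (by simp only [mem_Icc]; omega) (fun k hk hne => by
      simp only [mem_Icc] at hk
      rw [smul_lie, hmid k m (by omega) (by omega) hm1 hm2, smul_zero])]
    exact smul_lie _ _ _
  have hφnj : ∀ m, 2 ≤ m → m ≤ n - 1 → ⁅φ (e n), e m⁆ = α 1 • ⁅e n, e m⁆ := by
    intro m hm1 hm2
    rw [h5, add_lie, add_lie, neg_lie, sum_lie', smul_lie, smul_lie]
    rw [Finset.sum_eq_zero (fun k hk => by
      simp only [mem_Icc] at hk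
      rw [smul_lie, hmid k m (by omega) (by omega) hm1 hm2, smul_zero])]
    rw [hmid (n - 1) m (by omega) (by omega) hm1 hm2]
    simp
  have hP : ∀ i j : ℕ, 1 ≤ i → i < j → j ≤ n →
      φ ⁅e i, e j⁆ = (2 : ℂ)⁻¹ • (⁅φ (e i), e j⁆ + ⁅e i, φ (e j)⁆) := by
    intro i j hi1 hij hjn
    rcases (by omega : i = 1 ∨ 2 ≤ i) with hi | hi
    · subst hi
      rcases (by omega : (2 ≤ j ∧ j ≤ n - 2) ∨ j = n - 1 ∨ n = j) with hj | hj | hj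
      · -- main E equations
        rw [br1 hn htab hj.1 hj.2, hφ1j j (by omega) (by omega), br1 hn htab hj.1 hj.2]
        rcases (by omega : j = 2 ∨ j = 3 ∨ (4 ≤ j ∧ j ≤ n - 2)) with hc | hc | hc
        · subst hc
          rw [show (2 : ℕ) + 1 = 3 by norm_num, h3, h2, lie_add, lie_add, lie_smul, lie_smul,
            lie_smul, br1 hn htab (by omega) (by omega), br1 hn htab (by omega) (by omega),
            br0 hn htab (by omega) (by omega) (by omega) (by omega) (by omega) (by omega)
              (by omega) (by omega),
            show (2 : ℕ) + 1 = 3 by norm_num, show n - 2 + 1 = n - 1 by omega]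
          module
        · subst hc
          rw [show (3 : ℕ) + 1 = 4 by norm_num, h4 4 (by omega) (by omega), h3, lie_add,
            lie_smul, lie_smul, br1 hn htab (by omega) (by omega),
            br0 hn htab (by omega) (by omega) (by omega) (by omega) (by omega) (by omega)
              (by omega) (by omega),
            show (3 : ℕ) + 1 = 4 by norm_num]
          module
        · rw [h4 (j + 1) (by omega) (by omega), h4 j (by omega) (by omega), lie_smul,
            br1 hn htab (by omega) (by omega)]
          module
      · subst hj
        rw [br0 hn htab (by omega) (by omega) (by omega) (by omega) (by omega) (by omega)
          (by omega) (by omega), map_zero, hφ1j (n - 1) (by omega) (by omega),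
          br0 hn htab (by omega) (by omega) (by omega) (by omega) (by omega) (by omega)
            (by omega) (by omega),
          h4 (n - 1) (by omega) (by omega), lie_smul,
          br0 hn htab (by omega) (by omega) (by omega) (by omega) (by omega) (by omega)
            (by omega) (by omega)]
        simp
      · subst hj
        rw [br0 hn htab (by omega) (by omega) (by omega) (by omega) (by omega) (by omega)
          (by omega) (by omega), map_zero]
        have hL : ⁅φ (e 1), e n⁆ = ∑ k ∈ Icc 2 (n - 3), α k • e (k + 2) := by
          rw [h1, sum_lie']
          rw [← Finset.sum_subset (by intro x hx; simp only [mem_Icc] at *; omega :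
              Icc 2 (n - 3) ⊆ Icc 1 (n - 1))
            (fun x hx hx2 => by
              simp only [mem_Icc] at hx hx2
              rw [smul_lie, br0 hn htab (by omega) (by omega) (by omega) (by omega) (by omega)
                (by omega) (by omega) (by omega), smul_zero])]
          refine Finset.sum_congr rfl fun k hk => ?_
          simp only [mem_Icc] at hk
          rw [smul_lie, brn hn htab (by omega) (by omega)]
        have hR : ⁅e 1, φ (e n)⁆ = -(∑ i ∈ Icc 3 (n - 2), α (i - 1) • e (i + 1)) := by
          rw [h5, lie_add, lie_add, lie_neg, lie_smul, lie_smul, lie_sum']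
          rw [br0 hn htab (by omega) (by omega) (by omega) (by omega) (by omega) (by omega)
            (by omega) (by omega),
            br0 hn htab (by omega) (by omega) (by omega) (by omega) (by omega) (by omega)
              (by omega) (by omega), smul_zero, smul_zero, add_zero, add_zero]
          congr 1
          refine Finset.sum_congr rfl fun k hk => ?_
          simp only [mem_Icc] at hk
          rw [lie_smul, br1 hn htab (by omega) (by omega)]
        have hre : ∑ i ∈ Icc 3 (n - 2), α (i - 1) • e (i + 1)
            = ∑ k ∈ Icc 2 (n - 3), α k • e (k + 2) := by
          have h0 : ∀ f : ℕ → L, ∑ i ∈ Icc 3 (n - 2), f i = ∑ k ∈ Icc 2 (n - 3), f (k + 1) := by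
            intro f
            rw [← Finset.Ico_add_one_right_eq_Icc, ← Finset.Ico_add_one_right_eq_Icc, Finset.sum_Ico_eq_sum_range,
              Finset.sum_Ico_eq_sum_range, show n - 2 + 1 - 3 = n - 3 + 1 - 2 by omega]
            refine Finset.sum_congr rfl fun x _ => ?_
            congr 1
            omega
          rw [h0 (fun i => α (i - 1) • e (i + 1))]
          refine Finset.sum_congr rfl fun k hk => ?_
          simp only [mem_Icc] at hk
          rw [show k + 1 - 1 = k by omega, show k + 1 + 1 = k + 2 by omega]
        rw [hL, hR, hre]
        simp
    · rcases (by omega : j ≤ n - 1 ∨ n = j) with hj | hj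
      · rw [hmid i j (by omega) (by omega) (by omega) (by omega), map_zero,
          hφmid i (by omega) (by omega) j (by omega) (by omega),
          ← lie_skew (e i) (φ (e j)),
          hφmid j (by omega) (by omega) i (by omega) (by omega), neg_zero]
        simp
      · subst hj
        rcases (by omega : i ≤ n - 3 ∨ n - 2 ≤ i) with hc | hc
        · rw [brn hn htab hi hc]
          have hR : ⁅e i, φ (e n)⁆ = α 1 • e (i + 2) := by
            rw [← lie_skew (e i) (φ (e n)), hφnj i (by omega) (by omega),
              neg_eq_iff_eq_neg.mp (lie_skew (e i) (e n)), brn hn htab hi hc]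
            simp
          rw [hR]
          rcases (by omega : i = 2 ∨ i = 3 ∨ 4 ≤ i) with hd | hd | hd
          · subst hd
            rw [show (2 : ℕ) + 2 = 4 by norm_num, h4 4 (by omega) (by omega), h2, add_lie,
              add_lie, smul_lie, smul_lie, smul_lie, brn hn htab (by omega) (by omega),
              br0 hn htab (by omega) (by omega) (by omega) (by omega) (by omega) (by omega)
                (by omega) (by omega),
              br0 hn htab (by omega) (by omega) (by omega) (by omega) (by omega) (by omega)
                (by omega) (by omega),
              show (2 : ℕ) + 2 = 4 by norm_num]
            module
          · subst hd
            rw [show (3 : ℕ) + 2 = 5 by norm_num, h4 5 (by omega) (by omega), h3, add_lie,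
              smul_lie, smul_lie, brn hn htab (by omega) (by omega),
              br0 hn htab (by omega) (by omega) (by omega) (by omega) (by omega) (by omega)
                (by omega) (by omega),
              show (3 : ℕ) + 2 = 5 by norm_num]
            module
          · rw [h4 (i + 2) (by omega) (by omega), h4 i (by omega) (by omega), smul_lie,
              brn hn htab (by omega) (by omega)]
            module
        · rw [br0 hn htab (by omega) (by omega) (by omega) (by omega) (by omega) (by omega)
            (by omega) (by omega), map_zero,
            h4 i (by omega) (by omega), smul_lie,
            br0 hn htab (by omega) (by omega) (by omega) (by omega) (by omega) (by omega)
              (by omega) (by omega), smul_zero,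
            ← lie_skew (e i) (φ (e n)), hφnj i (by omega) (by omega),
            br0 hn htab (by omega) (by omega) (by omega) (by omega) (by omega) (by omega)
              (by omega) (by omega)]
          simp
  have hQ : ∀ i j : ℕ, 1 ≤ i → i ≤ n → 1 ≤ j → j ≤ n →
      φ ⁅e i, e j⁆ = (2 : ℂ)⁻¹ • (⁅φ (e i), e j⁆ + ⁅e i, φ (e j)⁆) := by
    intro i j hi1 hi2 hj1 hj2
    rcases lt_trichotomy i j with hc | hc | hc
    · exact hP i j hi1 hc hj2
    · subst hc
      rw [lie_self, map_zero, neg_eq_iff_eq_neg.mp (lie_skew (e i) (φ (e i)))]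
      module
    · have ht := hP j i hj1 hc hi2
      calc φ ⁅e i, e j⁆ = -φ ⁅e j, e i⁆ := by rw [← lie_skew, map_neg]
        _ = -((2 : ℂ)⁻¹ • (⁅φ (e j), e i⁆ + ⁅e j, φ (e i)⁆)) := by rw [ht]
        _ = (2 : ℂ)⁻¹ • (⁅φ (e i), e j⁆ + ⁅e i, φ (e j)⁆) := by
            rw [← lie_skew (φ (e i)) (e j), ← lie_skew (e i) (φ (e j)), ← smul_neg]
            congr 1
            abel
  intro x y
  rw [expand hb x, expand hb y]
  simp only [map_sum, map_smul, sum_lie', lie_sum', smul_lie, lie_smul, Finset.smul_sum,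
    smul_add]
  rw [← Finset.sum_add_distrib]
  refine Finset.sum_congr rfl fun k hk => ?_
  simp only [mem_Icc] at hk
  rw [← Finset.sum_add_distrib]
  refine Finset.sum_congr rfl fun l hl => ?_
  simp only [mem_Icc] at hl
  rw [hQ l k hl.1 hl.2 hk.1 hk.2]
  module

end Table
end G2n1


/-- Description of all 1/2-derivations of g^2_{(n,1)} for n ≥ 7. -/
theorem g2n1_half_derivations
    (n : ℕ) (hn : 7 ≤ n)
    (L : Type*) [LieRing L] [LieAlgebra ℂ L]
    (e : ℕ → L) (b : Module.Basis (Fin n) ℂ L)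
    (hb : ∀ i : Fin n, e (i.1 + 1) = b i)
    (htab : ∀ i j : ℕ, 1 ≤ i → i < j → j ≤ n →
      ⁅e i, e j⁆ =
        if i = 1 ∧ 2 ≤ j ∧ j ≤ n - 2 then e (j + 1)
        else if j = n ∧ 2 ≤ i ∧ i ≤ n - 3 then e (i + 2)
        else 0)
    (φ : L →ₗ[ℂ] L) :
    (∀ x y : L, φ ⁅x, y⁆ = (2 : ℂ)⁻¹ • (⁅φ x, y⁆ + ⁅x, φ y⁆)) ↔
    (∃ (α β : ℕ → ℂ) (γ : ℂ),
      φ (e 1) = ∑ i ∈ Finset.Icc 1 (n - 1), α i • e i ∧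
      φ (e 2) = α 1 • e 2 + β (n - 2) • e (n - 2) + β (n - 1) • e (n - 1) ∧
      φ (e 3) = α 1 • e 3 + ((1 / 2 : ℂ) * β (n - 2)) • e (n - 1) ∧
      (∀ i : ℕ, 4 ≤ i → i ≤ n - 1 → φ (e i) = α 1 • e i) ∧
      φ (e n) = -(∑ i ∈ Finset.Icc 3 (n - 2), α (i - 1) • e i)
        + γ • e (n - 1) + α 1 • e n) := by
  constructor
  · intro h
    exact G2n1.forward hn htab hb φ h
  · rintro ⟨α, β, γ, h1, h2, h3, h4, h5⟩
    exact G2n1.reverse hn htab hb φ α β γ h1 h2 h3 h4 h5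
end

section
/- Let g = g^1_7 be the 7-dimensional complex Lie algebra with basis e_1,…,e_7 and nonzero brackets [e_1,e_i] = e_{i+1} for 2 ≤ i ≤ 5, [e_2,e_3] = e_5, [e_2,e_4] = e_6, [e_2,e_5] = e_7, [e_3,e_4] = −e_7. Then every 1/2-derivation φ of g satisfies φ(e_6) = α_1 e_6 and φ(e_7) = α_1 e_7, where α_1 is the coefficient of e_1 in φ(e_1). -/
set_option maxHeartbeats 1000000 in
/-- Every 1/2-derivation of g^1_7 satisfies φ(e_6) = α₁ e_6 and φ(e_7) = α₁ e_7,
where α₁ is the coefficient of e_1 in φ(e_1). -/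
theorem g17_half_derivation_top
    (L : Type*) [LieRing L] [LieAlgebra ℂ L]
    (e : ℕ → L) (b : Module.Basis (Fin 7) ℂ L)
    (hb : ∀ i : Fin 7, e (i.1 + 1) = b i)
    (h1 : ∀ i : ℕ, 2 ≤ i → i ≤ 5 → ⁅e 1, e i⁆ = e (i + 1))
    (h23 : ⁅e 2, e 3⁆ = e 5) (h24 : ⁅e 2, e 4⁆ = e 6)
    (h25 : ⁅e 2, e 5⁆ = e 7) (h34 : ⁅e 3, e 4⁆ = -e 7)
    (hz : ∀ i j : ℕ, 1 ≤ i → i < j → j ≤ 7 →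
      ((i, j) ∉ ({(1, 2), (1, 3), (1, 4), (1, 5), (2, 3), (2, 4), (2, 5), (3, 4)}
        : Set (ℕ × ℕ))) → ⁅e i, e j⁆ = 0)
    (φ : L →ₗ[ℂ] L)
    (hφ : ∀ x y : L, φ ⁅x, y⁆ = (2 : ℂ)⁻¹ • (⁅φ x, y⁆ + ⁅x, φ y⁆)) :
    φ (e 6) = (b.repr (φ (e 1)) ⟨0, by omega⟩) • e 6 ∧
    φ (e 7) = (b.repr (φ (e 1)) ⟨0, by omega⟩) • e 7 := by
  have exp : ∀ x : L, x = (b.repr x 0) • e 1 + (b.repr x 1) • e 2 + (b.repr x 2) • e 3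
      + (b.repr x 3) • e 4 + (b.repr x 4) • e 5 + (b.repr x 5) • e 6 + (b.repr x 6) • e 7 := by
    intro x
    have h := b.sum_repr x
    rw [Fin.sum_univ_seven] at h
    rw [← hb 0, ← hb 1, ← hb 2, ← hb 3, ← hb 4, ← hb 5, ← hb 6] at h
    exact h.symm
  -- bracket table
  have t12 : ⁅e 1, e 2⁆ = e 3 := h1 2 (by norm_num) (by norm_num)
  have t13 : ⁅e 1, e 3⁆ = e 4 := h1 3 (by norm_num) (by norm_num)
  have t14 : ⁅e 1, e 4⁆ = e 5 := h1 4 (by norm_num) (by norm_num)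
  have t15 : ⁅e 1, e 5⁆ = e 6 := h1 5 (by norm_num) (by norm_num)
  have t16 : ⁅e 1, e 6⁆ = 0 := hz 1 6 (by norm_num) (by norm_num) (by norm_num) (by simp)
  have t17 : ⁅e 1, e 7⁆ = 0 := hz 1 7 (by norm_num) (by norm_num) (by norm_num) (by simp)
  have t26 : ⁅e 2, e 6⁆ = 0 := hz 2 6 (by norm_num) (by norm_num) (by norm_num) (by simp)
  have t27 : ⁅e 2, e 7⁆ = 0 := hz 2 7 (by norm_num) (by norm_num) (by norm_num) (by simp)
  have t35 : ⁅e 3, e 5⁆ = 0 := hz 3 5 (by norm_num) (by norm_num) (by norm_num) (by simp)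
  have t36 : ⁅e 3, e 6⁆ = 0 := hz 3 6 (by norm_num) (by norm_num) (by norm_num) (by simp)
  have t37 : ⁅e 3, e 7⁆ = 0 := hz 3 7 (by norm_num) (by norm_num) (by norm_num) (by simp)
  have t45 : ⁅e 4, e 5⁆ = 0 := hz 4 5 (by norm_num) (by norm_num) (by norm_num) (by simp)
  have t46 : ⁅e 4, e 6⁆ = 0 := hz 4 6 (by norm_num) (by norm_num) (by norm_num) (by simp)
  have t47 : ⁅e 4, e 7⁆ = 0 := hz 4 7 (by norm_num) (by norm_num) (by norm_num) (by simp)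
  have t56 : ⁅e 5, e 6⁆ = 0 := hz 5 6 (by norm_num) (by norm_num) (by norm_num) (by simp)
  have t57 : ⁅e 5, e 7⁆ = 0 := hz 5 7 (by norm_num) (by norm_num) (by norm_num) (by simp)
  have t21 : ⁅e 2, e 1⁆ = -e 3 := by rw [← lie_skew, t12]
  have t31 : ⁅e 3, e 1⁆ = -e 4 := by rw [← lie_skew, t13]
  have t41 : ⁅e 4, e 1⁆ = -e 5 := by rw [← lie_skew, t14]
  have t51 : ⁅e 5, e 1⁆ = -e 6 := by rw [← lie_skew, t15]
  have t32 : ⁅e 3, e 2⁆ = -e 5 := by rw [← lie_skew, h23]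
  have t42 : ⁅e 4, e 2⁆ = -e 6 := by rw [← lie_skew, h24]
  have t52 : ⁅e 5, e 2⁆ = -e 7 := by rw [← lie_skew, h25]
  have t43 : ⁅e 4, e 3⁆ = e 7 := by rw [← lie_skew, h34]; simp
  have t53 : ⁅e 5, e 3⁆ = 0 := by rw [← lie_skew, t35]; simp
  have t54 : ⁅e 5, e 4⁆ = 0 := by rw [← lie_skew, t45]; simp
  -- generic bracket expansions
  have L1 : ∀ x : L, ⁅e 1, x⁆ = (b.repr x 1) • e 3 + (b.repr x 2) • e 4
      + (b.repr x 3) • e 5 + (b.repr x 4) • e 6 := by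
    intro x
    conv_lhs => rw [exp x]
    simp only [lie_add, lie_smul, lie_self, t12, t13, t14, t15, t16, t17,
      smul_zero, zero_add, add_zero]
  have L2 : ∀ x : L, ⁅e 2, x⁆ = -((b.repr x 0) • e 3) + (b.repr x 2) • e 5
      + (b.repr x 3) • e 6 + (b.repr x 4) • e 7 := by
    intro x
    conv_lhs => rw [exp x]
    simp only [lie_add, lie_smul, lie_self, t21, h23, h24, h25, t26, t27,
      smul_zero, smul_neg, zero_add, add_zero]
  have L3 : ∀ x : L, ⁅e 3, x⁆ = -((b.repr x 0) • e 4) - (b.repr x 1) • e 5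
      - (b.repr x 3) • e 7 := by
    intro x
    conv_lhs => rw [exp x]
    simp only [lie_add, lie_smul, lie_self, t31, t32, h34, t35, t36, t37,
      smul_zero, smul_neg, zero_add, add_zero]
    module
  have L4 : ∀ x : L, ⁅e 4, x⁆ = -((b.repr x 0) • e 5) - (b.repr x 1) • e 6
      + (b.repr x 2) • e 7 := by
    intro x
    conv_lhs => rw [exp x]
    simp only [lie_add, lie_smul, lie_self, t41, t42, t43, t45, t46, t47,
      smul_zero, smul_neg, zero_add, add_zero]
    module
  have L5 : ∀ x : L, ⁅e 5, x⁆ = -((b.repr x 0) • e 6) - (b.repr x 1) • e 7 := by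
    intro x
    conv_lhs => rw [exp x]
    simp only [lie_add, lie_smul, lie_self, t51, t52, t53, t54, t56, t57,
      smul_zero, smul_neg, zero_add, add_zero]
    module
  have re1 : b.repr (e 1) = Finsupp.single 0 1 := by
    rw [show e 1 = b 0 from hb 0, b.repr_self]
  have re2 : b.repr (e 2) = Finsupp.single 1 1 := by
    rw [show e 2 = b 1 from hb 1, b.repr_self]
  have re3 : b.repr (e 3) = Finsupp.single 2 1 := by
    rw [show e 3 = b 2 from hb 2, b.repr_self]
  have re4 : b.repr (e 4) = Finsupp.single 3 1 := by
    rw [show e 4 = b 3 from hb 3, b.repr_self]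
  have re5 : b.repr (e 5) = Finsupp.single 4 1 := by
    rw [show e 5 = b 4 from hb 4, b.repr_self]
  have re6 : b.repr (e 6) = Finsupp.single 5 1 := by
    rw [show e 6 = b 5 from hb 5, b.repr_self]
  have re7 : b.repr (e 7) = Finsupp.single 6 1 := by
    rw [show e 7 = b 6 from hb 6, b.repr_self]
  -- the half-derivation equations, expanded
  have E3 := hφ (e 1) (e 2)
  rw [t12, ← lie_skew (φ (e 1)) (e 2), L2 (φ (e 1)), L1 (φ (e 2))] at E3
  have E4 := hφ (e 1) (e 3)
  rw [t13, ← lie_skew (φ (e 1)) (e 3), L3 (φ (e 1)), L1 (φ (e 3))] at E4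
  have E5a := hφ (e 1) (e 4)
  rw [t14, ← lie_skew (φ (e 1)) (e 4), L4 (φ (e 1)), L1 (φ (e 4))] at E5a
  have E5b := hφ (e 2) (e 3)
  rw [h23, ← lie_skew (φ (e 2)) (e 3), L3 (φ (e 2)), L2 (φ (e 3))] at E5b
  have E6a := hφ (e 1) (e 5)
  rw [t15, ← lie_skew (φ (e 1)) (e 5), L5 (φ (e 1)), L1 (φ (e 5))] at E6a
  have E6b := hφ (e 2) (e 4)
  rw [h24, ← lie_skew (φ (e 2)) (e 4), L4 (φ (e 2)), L2 (φ (e 4))] at E6b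
  have E7 := hφ (e 2) (e 5)
  rw [h25, ← lie_skew (φ (e 2)) (e 5), L5 (φ (e 2)), L2 (φ (e 5))] at E7
  -- scalar coordinate equations
  have s32 : b.repr (φ (e 3)) 1 = 0 := by
    have h := congrArg (fun v => b.repr v (1 : Fin 7)) E3
    simp only [map_smul, map_add, map_neg, map_sub, re1, re2, re3, re4, re5, re6, re7,
      Finsupp.smul_apply, Finsupp.add_apply, Finsupp.neg_apply, Finsupp.sub_apply,
      Finsupp.single_apply] at h
    simp at h
    linear_combination h
  have s33 : b.repr (φ (e 3)) 2
      = (2:ℂ)⁻¹ * (b.repr (φ (e 1)) 0 + b.repr (φ (e 2)) 1) := by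
    have h := congrArg (fun v => b.repr v (2 : Fin 7)) E3
    simp only [map_smul, map_add, map_neg, map_sub, re1, re2, re3, re4, re5, re6, re7,
      Finsupp.smul_apply, Finsupp.add_apply, Finsupp.neg_apply, Finsupp.sub_apply,
      Finsupp.single_apply] at h
    simp at h
    linear_combination h
  have s34 : b.repr (φ (e 3)) 3 = (2:ℂ)⁻¹ * b.repr (φ (e 2)) 2 := by
    have h := congrArg (fun v => b.repr v (3 : Fin 7)) E3
    simp only [map_smul, map_add, map_neg, map_sub, re1, re2, re3, re4, re5, re6, re7,
      Finsupp.smul_apply, Finsupp.add_apply, Finsupp.neg_apply, Finsupp.sub_apply,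
      Finsupp.single_apply] at h
    simp at h
    linear_combination h
  have s42 : b.repr (φ (e 4)) 1 = 0 := by
    have h := congrArg (fun v => b.repr v (1 : Fin 7)) E4
    simp only [map_smul, map_add, map_neg, map_sub, re1, re2, re3, re4, re5, re6, re7,
      Finsupp.smul_apply, Finsupp.add_apply, Finsupp.neg_apply, Finsupp.sub_apply,
      Finsupp.single_apply] at h
    simp at h
    linear_combination h
  have s43 : b.repr (φ (e 4)) 2 = (2:ℂ)⁻¹ * b.repr (φ (e 3)) 1 := by
    have h := congrArg (fun v => b.repr v (2 : Fin 7)) E4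
    simp only [map_smul, map_add, map_neg, map_sub, re1, re2, re3, re4, re5, re6, re7,
      Finsupp.smul_apply, Finsupp.add_apply, Finsupp.neg_apply, Finsupp.sub_apply,
      Finsupp.single_apply] at h
    simp at h
    linear_combination h
  have s44 : b.repr (φ (e 4)) 3
      = (2:ℂ)⁻¹ * (b.repr (φ (e 1)) 0 + b.repr (φ (e 3)) 2) := by
    have h := congrArg (fun v => b.repr v (3 : Fin 7)) E4
    simp only [map_smul, map_add, map_neg, map_sub, re1, re2, re3, re4, re5, re6, re7,
      Finsupp.smul_apply, Finsupp.add_apply, Finsupp.neg_apply, Finsupp.sub_apply,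
      Finsupp.single_apply] at h
    simp at h
    linear_combination h
  have s45 : b.repr (φ (e 4)) 4
      = (2:ℂ)⁻¹ * (b.repr (φ (e 1)) 1 + b.repr (φ (e 3)) 3) := by
    have h := congrArg (fun v => b.repr v (4 : Fin 7)) E4
    simp only [map_smul, map_add, map_neg, map_sub, re1, re2, re3, re4, re5, re6, re7,
      Finsupp.smul_apply, Finsupp.add_apply, Finsupp.neg_apply, Finsupp.sub_apply,
      Finsupp.single_apply] at h
    simp at h
    linear_combination h
  have s51 : b.repr (φ (e 5)) 0 = 0 := by
    have h := congrArg (fun v => b.repr v (0 : Fin 7)) E5a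
    simp only [map_smul, map_add, map_neg, map_sub, re1, re2, re3, re4, re5, re6, re7,
      Finsupp.smul_apply, Finsupp.add_apply, Finsupp.neg_apply, Finsupp.sub_apply,
      Finsupp.single_apply] at h
    simp at h
    linear_combination h
  have s52 : b.repr (φ (e 5)) 1 = 0 := by
    have h := congrArg (fun v => b.repr v (1 : Fin 7)) E5a
    simp only [map_smul, map_add, map_neg, map_sub, re1, re2, re3, re4, re5, re6, re7,
      Finsupp.smul_apply, Finsupp.add_apply, Finsupp.neg_apply, Finsupp.sub_apply,
      Finsupp.single_apply] at h
    simp at h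
    linear_combination h
  have s53 : b.repr (φ (e 5)) 2 = (2:ℂ)⁻¹ * b.repr (φ (e 4)) 1 := by
    have h := congrArg (fun v => b.repr v (2 : Fin 7)) E5a
    simp only [map_smul, map_add, map_neg, map_sub, re1, re2, re3, re4, re5, re6, re7,
      Finsupp.smul_apply, Finsupp.add_apply, Finsupp.neg_apply, Finsupp.sub_apply,
      Finsupp.single_apply] at h
    simp at h
    linear_combination h
  have s54 : b.repr (φ (e 5)) 3 = (2:ℂ)⁻¹ * b.repr (φ (e 4)) 2 := by
    have h := congrArg (fun v => b.repr v (3 : Fin 7)) E5a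
    simp only [map_smul, map_add, map_neg, map_sub, re1, re2, re3, re4, re5, re6, re7,
      Finsupp.smul_apply, Finsupp.add_apply, Finsupp.neg_apply, Finsupp.sub_apply,
      Finsupp.single_apply] at h
    simp at h
    linear_combination h
  have s55 : b.repr (φ (e 5)) 4
      = (2:ℂ)⁻¹ * (b.repr (φ (e 1)) 0 + b.repr (φ (e 4)) 3) := by
    have h := congrArg (fun v => b.repr v (4 : Fin 7)) E5a
    simp only [map_smul, map_add, map_neg, map_sub, re1, re2, re3, re4, re5, re6, re7,
      Finsupp.smul_apply, Finsupp.add_apply, Finsupp.neg_apply, Finsupp.sub_apply,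
      Finsupp.single_apply] at h
    simp at h
    linear_combination h
  have s56 : b.repr (φ (e 5)) 5
      = (2:ℂ)⁻¹ * (b.repr (φ (e 1)) 1 + b.repr (φ (e 4)) 4) := by
    have h := congrArg (fun v => b.repr v (5 : Fin 7)) E5a
    simp only [map_smul, map_add, map_neg, map_sub, re1, re2, re3, re4, re5, re6, re7,
      Finsupp.smul_apply, Finsupp.add_apply, Finsupp.neg_apply, Finsupp.sub_apply,
      Finsupp.single_apply] at h
    simp at h
    linear_combination h
  have u54 : b.repr (φ (e 5)) 3 = (2:ℂ)⁻¹ * b.repr (φ (e 2)) 0 := by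
    have h := congrArg (fun v => b.repr v (3 : Fin 7)) E5b
    simp only [map_smul, map_add, map_neg, map_sub, re1, re2, re3, re4, re5, re6, re7,
      Finsupp.smul_apply, Finsupp.add_apply, Finsupp.neg_apply, Finsupp.sub_apply,
      Finsupp.single_apply] at h
    simp at h
    linear_combination h
  have u55 : b.repr (φ (e 5)) 4
      = (2:ℂ)⁻¹ * (b.repr (φ (e 2)) 1 + b.repr (φ (e 3)) 2) := by
    have h := congrArg (fun v => b.repr v (4 : Fin 7)) E5b
    simp only [map_smul, map_add, map_neg, map_sub, re1, re2, re3, re4, re5, re6, re7,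
      Finsupp.smul_apply, Finsupp.add_apply, Finsupp.neg_apply, Finsupp.sub_apply,
      Finsupp.single_apply] at h
    simp at h
    linear_combination h
  have u56 : b.repr (φ (e 5)) 5 = (2:ℂ)⁻¹ * b.repr (φ (e 3)) 3 := by
    have h := congrArg (fun v => b.repr v (5 : Fin 7)) E5b
    simp only [map_smul, map_add, map_neg, map_sub, re1, re2, re3, re4, re5, re6, re7,
      Finsupp.smul_apply, Finsupp.add_apply, Finsupp.neg_apply, Finsupp.sub_apply,
      Finsupp.single_apply] at h
    simp at h
    linear_combination h
  have s61 : b.repr (φ (e 6)) 0 = 0 := by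
    have h := congrArg (fun v => b.repr v (0 : Fin 7)) E6a
    simp only [map_smul, map_add, map_neg, map_sub, re1, re2, re3, re4, re5, re6, re7,
      Finsupp.smul_apply, Finsupp.add_apply, Finsupp.neg_apply, Finsupp.sub_apply,
      Finsupp.single_apply] at h
    simp at h
    linear_combination h
  have s62 : b.repr (φ (e 6)) 1 = 0 := by
    have h := congrArg (fun v => b.repr v (1 : Fin 7)) E6a
    simp only [map_smul, map_add, map_neg, map_sub, re1, re2, re3, re4, re5, re6, re7,
      Finsupp.smul_apply, Finsupp.add_apply, Finsupp.neg_apply, Finsupp.sub_apply,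
      Finsupp.single_apply] at h
    simp at h
    linear_combination h
  have s63 : b.repr (φ (e 6)) 2 = (2:ℂ)⁻¹ * b.repr (φ (e 5)) 1 := by
    have h := congrArg (fun v => b.repr v (2 : Fin 7)) E6a
    simp only [map_smul, map_add, map_neg, map_sub, re1, re2, re3, re4, re5, re6, re7,
      Finsupp.smul_apply, Finsupp.add_apply, Finsupp.neg_apply, Finsupp.sub_apply,
      Finsupp.single_apply] at h
    simp at h
    linear_combination h
  have s64 : b.repr (φ (e 6)) 3 = (2:ℂ)⁻¹ * b.repr (φ (e 5)) 2 := by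
    have h := congrArg (fun v => b.repr v (3 : Fin 7)) E6a
    simp only [map_smul, map_add, map_neg, map_sub, re1, re2, re3, re4, re5, re6, re7,
      Finsupp.smul_apply, Finsupp.add_apply, Finsupp.neg_apply, Finsupp.sub_apply,
      Finsupp.single_apply] at h
    simp at h
    linear_combination h
  have s65 : b.repr (φ (e 6)) 4 = (2:ℂ)⁻¹ * b.repr (φ (e 5)) 3 := by
    have h := congrArg (fun v => b.repr v (4 : Fin 7)) E6a
    simp only [map_smul, map_add, map_neg, map_sub, re1, re2, re3, re4, re5, re6, re7,
      Finsupp.smul_apply, Finsupp.add_apply, Finsupp.neg_apply, Finsupp.sub_apply,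
      Finsupp.single_apply] at h
    simp at h
    linear_combination h
  have s66 : b.repr (φ (e 6)) 5
      = (2:ℂ)⁻¹ * (b.repr (φ (e 1)) 0 + b.repr (φ (e 5)) 4) := by
    have h := congrArg (fun v => b.repr v (5 : Fin 7)) E6a
    simp only [map_smul, map_add, map_neg, map_sub, re1, re2, re3, re4, re5, re6, re7,
      Finsupp.smul_apply, Finsupp.add_apply, Finsupp.neg_apply, Finsupp.sub_apply,
      Finsupp.single_apply] at h
    simp at h
    linear_combination h
  have s67 : b.repr (φ (e 6)) 6 = (2:ℂ)⁻¹ * b.repr (φ (e 1)) 1 := by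
    have h := congrArg (fun v => b.repr v (6 : Fin 7)) E6a
    simp only [map_smul, map_add, map_neg, map_sub, re1, re2, re3, re4, re5, re6, re7,
      Finsupp.smul_apply, Finsupp.add_apply, Finsupp.neg_apply, Finsupp.sub_apply,
      Finsupp.single_apply] at h
    simp at h
    linear_combination h
  have u67 : b.repr (φ (e 6)) 6
      = (2:ℂ)⁻¹ * (b.repr (φ (e 4)) 4 - b.repr (φ (e 2)) 2) := by
    have h := congrArg (fun v => b.repr v (6 : Fin 7)) E6b
    simp only [map_smul, map_add, map_neg, map_sub, re1, re2, re3, re4, re5, re6, re7,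
      Finsupp.smul_apply, Finsupp.add_apply, Finsupp.neg_apply, Finsupp.sub_apply,
      Finsupp.single_apply] at h
    simp at h
    linear_combination h
  have s71 : b.repr (φ (e 7)) 0 = 0 := by
    have h := congrArg (fun v => b.repr v (0 : Fin 7)) E7
    simp only [map_smul, map_add, map_neg, map_sub, re1, re2, re3, re4, re5, re6, re7,
      Finsupp.smul_apply, Finsupp.add_apply, Finsupp.neg_apply, Finsupp.sub_apply,
      Finsupp.single_apply] at h
    simp at h
    linear_combination h
  have s72 : b.repr (φ (e 7)) 1 = 0 := by
    have h := congrArg (fun v => b.repr v (1 : Fin 7)) E7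
    simp only [map_smul, map_add, map_neg, map_sub, re1, re2, re3, re4, re5, re6, re7,
      Finsupp.smul_apply, Finsupp.add_apply, Finsupp.neg_apply, Finsupp.sub_apply,
      Finsupp.single_apply] at h
    simp at h
    linear_combination h
  have s73 : b.repr (φ (e 7)) 2 = -((2:ℂ)⁻¹ * b.repr (φ (e 5)) 0) := by
    have h := congrArg (fun v => b.repr v (2 : Fin 7)) E7
    simp only [map_smul, map_add, map_neg, map_sub, re1, re2, re3, re4, re5, re6, re7,
      Finsupp.smul_apply, Finsupp.add_apply, Finsupp.neg_apply, Finsupp.sub_apply,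
      Finsupp.single_apply] at h
    simp at h
    linear_combination h
  have s74 : b.repr (φ (e 7)) 3 = 0 := by
    have h := congrArg (fun v => b.repr v (3 : Fin 7)) E7
    simp only [map_smul, map_add, map_neg, map_sub, re1, re2, re3, re4, re5, re6, re7,
      Finsupp.smul_apply, Finsupp.add_apply, Finsupp.neg_apply, Finsupp.sub_apply,
      Finsupp.single_apply] at h
    simp at h
    linear_combination h
  have s75 : b.repr (φ (e 7)) 4 = (2:ℂ)⁻¹ * b.repr (φ (e 5)) 2 := by
    have h := congrArg (fun v => b.repr v (4 : Fin 7)) E7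
    simp only [map_smul, map_add, map_neg, map_sub, re1, re2, re3, re4, re5, re6, re7,
      Finsupp.smul_apply, Finsupp.add_apply, Finsupp.neg_apply, Finsupp.sub_apply,
      Finsupp.single_apply] at h
    simp at h
    linear_combination h
  have s76 : b.repr (φ (e 7)) 5
      = (2:ℂ)⁻¹ * (b.repr (φ (e 2)) 0 + b.repr (φ (e 5)) 3) := by
    have h := congrArg (fun v => b.repr v (5 : Fin 7)) E7
    simp only [map_smul, map_add, map_neg, map_sub, re1, re2, re3, re4, re5, re6, re7,
      Finsupp.smul_apply, Finsupp.add_apply, Finsupp.neg_apply, Finsupp.sub_apply,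
      Finsupp.single_apply] at h
    simp at h
    linear_combination h
  have s77 : b.repr (φ (e 7)) 6
      = (2:ℂ)⁻¹ * (b.repr (φ (e 2)) 1 + b.repr (φ (e 5)) 4) := by
    have h := congrArg (fun v => b.repr v (6 : Fin 7)) E7
    simp only [map_smul, map_add, map_neg, map_sub, re1, re2, re3, re4, re5, re6, re7,
      Finsupp.smul_apply, Finsupp.add_apply, Finsupp.neg_apply, Finsupp.sub_apply,
      Finsupp.single_apply] at h
    simp at h
    linear_combination h
  -- solve the linear system
  have z43 : b.repr (φ (e 4)) 2 = 0 := by rw [s43, s32]; ring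
  have z53 : b.repr (φ (e 5)) 2 = 0 := by rw [s53, s42]; ring
  have z54 : b.repr (φ (e 5)) 3 = 0 := by rw [s54, z43]; ring
  have z21 : b.repr (φ (e 2)) 0 = 0 := by linear_combination 2*z54 - 2*u54
  have z22 : b.repr (φ (e 2)) 1 = b.repr (φ (e 1)) 0 := by
    linear_combination (-2/5 : ℂ)*s33 + (4/5 : ℂ)*s44 + (8/5 : ℂ)*s55 + (-8/5 : ℂ)*u55
  have z55 : b.repr (φ (e 5)) 4 = b.repr (φ (e 1)) 0 := by
    linear_combination s55 + (1/2 : ℂ)*s44 + (1/4 : ℂ)*s33 + (1/8 : ℂ)*z22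
  have z12 : b.repr (φ (e 1)) 1 = 0 := by
    linear_combination (2/5 : ℂ)*s34 + (-2/5 : ℂ)*s45 + (-6/5 : ℂ)*s56 + (6/5 : ℂ)*u56
      + (-2/5 : ℂ)*s67 + (2/5 : ℂ)*u67
  -- finish
  have z63 : b.repr (φ (e 6)) 2 = 0 := by rw [s63, s52]; ring
  have z64 : b.repr (φ (e 6)) 3 = 0 := by rw [s64, z53]; ring
  have z65 : b.repr (φ (e 6)) 4 = 0 := by rw [s65, z54]; ring
  have z66 : b.repr (φ (e 6)) 5 = b.repr (φ (e 1)) 0 := by rw [s66, z55]; ring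
  have z67 : b.repr (φ (e 6)) 6 = 0 := by rw [s67, z12]; ring
  have z73 : b.repr (φ (e 7)) 2 = 0 := by rw [s73, s51]; ring
  have z75 : b.repr (φ (e 7)) 4 = 0 := by rw [s75, z53]; ring
  have z76 : b.repr (φ (e 7)) 5 = 0 := by rw [s76, z21, z54]; ring
  have z77 : b.repr (φ (e 7)) 6 = b.repr (φ (e 1)) 0 := by rw [s77, z22, z55]; ring
  constructor
  · show φ (e 6) = (b.repr (φ (e 1)) (0 : Fin 7)) • e 6
    rw [exp (φ (e 6)), s61, s62, z63, z64, z65, z66, z67]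
    module
  · show φ (e 7) = (b.repr (φ (e 1)) (0 : Fin 7)) • e 7
    rw [exp (φ (e 7)), s71, s72, z73, s74, z75, z76, z77]
    module
end

section
/- Let g = g^1_{(5,1)} be the 5-dimensional complex Lie algebra with nonzero brackets [e_1,e_2]=e_3, [e_1,e_3]=e_4, [e_2,e_3]=e_5. Define a commutative bilinear multiplication · on g by e_1·e_1 = α_4 e_4 + α_5 e_5, e_1·e_2 = β_4 e_4 + β_5 e_5, e_2·e_2 = γ_4 e_4 + γ_5 e_5 (all other products of basis elements zero), for arbitrary scalars α_4, α_5, β_4, β_5, γ_4, γ_5. Then (g, ·, [-,-]) is a transposed Poisson algebra. -/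
/-- The multiplication TP_1(g^1_{(5,1)}) makes g^1_{(5,1)} a transposed Poisson algebra. -/
theorem tp1_g151
    (L : Type*) [LieRing L] [LieAlgebra ℂ L]
    (e : ℕ → L) (b : Module.Basis (Fin 5) ℂ L)
    (hb : ∀ i : Fin 5, e (i.1 + 1) = b i)
    (h12 : ⁅e 1, e 2⁆ = e 3) (h13 : ⁅e 1, e 3⁆ = e 4) (h23 : ⁅e 2, e 3⁆ = e 5)
    (hz : ∀ i j : ℕ, 1 ≤ i → i < j → j ≤ 5 →
      ((i, j) ∉ ({(1, 2), (1, 3), (2, 3)} : Set (ℕ × ℕ))) → ⁅e i, e j⁆ = 0)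
    (α₄ α₅ β₄ β₅ γ₄ γ₅ : ℂ)
    (m : L →ₗ[ℂ] L →ₗ[ℂ] L)
    (hcomm : ∀ x y : L, m x y = m y x)
    (m11 : m (e 1) (e 1) = α₄ • e 4 + α₅ • e 5)
    (m12 : m (e 1) (e 2) = β₄ • e 4 + β₅ • e 5)
    (m22 : m (e 2) (e 2) = γ₄ • e 4 + γ₅ • e 5)
    (mz : ∀ i j : ℕ, 1 ≤ i → i ≤ j → j ≤ 5 →
      ((i, j) ∉ ({(1, 1), (1, 2), (2, 2)} : Set (ℕ × ℕ))) → m (e i) (e j) = 0) :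
    (∀ x y : L, m x y = m y x) ∧
    (∀ x y z : L, m (m x y) z = m x (m y z)) ∧
    (∀ x y z : L, (2 : ℂ) • m z ⁅x, y⁆ = ⁅m z x, y⁆ + ⁅x, m z y⁆) := by
  classical
  have he : ∀ i : Fin 5, b i = e (i.1 + 1) := fun i => (hb i).symm
  -- extension principle: a linear map into a submodule
  have key : ∀ (f : L →ₗ[ℂ] L) (S : Submodule ℂ L),
      (∀ i : Fin 5, f (b i) ∈ S) → ∀ x : L, f x ∈ S := by
    intro f S h x
    have hx : x ∈ Submodule.span ℂ (Set.range b) := by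
      rw [b.span_eq]; trivial
    refine Submodule.span_induction ?_ ?_ ?_ ?_ hx
    · rintro _ ⟨i, rfl⟩; exact h i
    · simpa using S.zero_mem
    · intro u v _ _ hu hv; rw [map_add]; exact S.add_mem hu hv
    · intro c u _ hu; rw [map_smul]; exact S.smul_mem c hu
  -- m vanishes whenever one index is ≥ 3
  have hmz0 : ∀ i j : ℕ, 1 ≤ i → i ≤ 5 → 1 ≤ j → j ≤ 5 → ¬(i ≤ 2 ∧ j ≤ 2) →
      m (e i) (e j) = 0 := by
    intro i j hi1 hi5 hj1 hj5 hn
    rcases le_total i j with h | h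
    · exact mz i j hi1 h hj5 (by simp; omega)
    · rw [hcomm]; exact mz j i hj1 h hi5 (by simp; omega)
  set S45 : Submodule ℂ L := Submodule.span ℂ {e 4, e 5} with hS45
  set S345 : Submodule ℂ L := Submodule.span ℂ {e 3, e 4, e 5} with hS345
  have mem4 : e 4 ∈ S45 := Submodule.subset_span (by simp)
  have mem5 : e 5 ∈ S45 := Submodule.subset_span (by simp)
  have mem3' : e 3 ∈ S345 := Submodule.subset_span (by simp)
  have mem4' : e 4 ∈ S345 := Submodule.subset_span (by simp)
  have mem5' : e 5 ∈ S345 := Submodule.subset_span (by simp)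
  -- products of basis vectors lie in S45
  have hmbb : ∀ i j : ℕ, 1 ≤ i → i ≤ 5 → 1 ≤ j → j ≤ 5 → m (e i) (e j) ∈ S45 := by
    intro i j hi1 hi5 hj1 hj5
    interval_cases i <;> interval_cases j <;>
      first
        | (rw [m11]; exact add_mem (S45.smul_mem _ mem4) (S45.smul_mem _ mem5))
        | (rw [m12]; exact add_mem (S45.smul_mem _ mem4) (S45.smul_mem _ mem5))
        | (rw [hcomm, m12]; exact add_mem (S45.smul_mem _ mem4) (S45.smul_mem _ mem5))
        | (rw [m22]; exact add_mem (S45.smul_mem _ mem4) (S45.smul_mem _ mem5))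
        | (rw [hmz0 _ _ (by norm_num) (by norm_num) (by norm_num) (by norm_num) (by omega)];
            exact S45.zero_mem)
  -- products always lie in S45
  have hmS : ∀ x y : L, m x y ∈ S45 := by
    intro x y
    refine key (m x) S45 (fun i => ?_) y
    rw [he i]
    refine key (m.flip (e (i.1 + 1))) S45 (fun k => ?_) x
    simp only [LinearMap.flip_apply]
    rw [he k]
    exact hmbb _ _ (by omega) (by omega) (by omega) (by omega)
  -- brackets of basis vectors lie in S345
  have hbb : ∀ i j : ℕ, 1 ≤ i → i ≤ 5 → 1 ≤ j → j ≤ 5 → ⁅e i, e j⁆ ∈ S345 := by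
    intro i j hi1 hi5 hj1 hj5
    interval_cases i <;> interval_cases j <;>
      first
        | (rw [h12]; exact mem3')
        | (rw [h13]; exact mem4')
        | (rw [h23]; exact mem5')
        | (rw [← neg_mem_iff, lie_skew, h12]; exact mem3')
        | (rw [← neg_mem_iff, lie_skew, h13]; exact mem4')
        | (rw [← neg_mem_iff, lie_skew, h23]; exact mem5')
        | (rw [lie_self]; exact S345.zero_mem)
        | (rw [hz] <;> first | exact S345.zero_mem | omega | (simp; done))
        | (rw [← neg_mem_iff, lie_skew, hz] <;>
            first | exact S345.zero_mem | omega | (simp; done))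
  -- brackets always lie in S345
  have hbS : ∀ x y : L, ⁅x, y⁆ ∈ S345 := by
    intro x y
    refine key (LieAlgebra.ad ℂ L x) S345 (fun i => ?_) y
    simp only [LieAlgebra.ad_apply]
    rw [← neg_mem_iff, lie_skew, ← LieAlgebra.ad_apply (R := ℂ)]
    refine key (LieAlgebra.ad ℂ L (b i)) S345 (fun k => ?_) x
    simp only [LieAlgebra.ad_apply]
    rw [he i, he k]
    exact hbb _ _ (by omega) (by omega) (by omega) (by omega)
  -- m z (e j) = 0 for j ∈ {3,4,5}
  have hmx : ∀ j : ℕ, 3 ≤ j → j ≤ 5 → ∀ z : L, m z (e j) = 0 := by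
    intro j hj hj5 z
    have h0 : m.flip (e j) = 0 := b.ext fun i => by
      simp only [LinearMap.flip_apply, LinearMap.zero_apply]
      rw [he i]
      exact hmz0 _ _ (by omega) (by omega) (by omega) (by omega) (by omega)
    exact DFunLike.congr_fun h0 z
  -- m kills S345 (hence S45)
  have hmkill : ∀ (z w : L), w ∈ S345 → m z w = 0 := by
    intro z w hw
    refine Submodule.span_induction ?_ ?_ ?_ ?_ hw
    · intro u hu
      rcases hu with h | h | h <;> subst h <;>
        exact hmx _ (by norm_num) (by norm_num) z
    · simp
    · intro u v _ _ hu hv; rw [map_add, hu, hv, add_zero]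
    · intro c u _ hu; rw [map_smul, hu, smul_zero]
  have hS45le : S45 ≤ S345 := Submodule.span_mono (by intro u hu; simp at hu ⊢; tauto)
  -- brackets with e 4, e 5 vanish
  have hbz : ∀ i j : ℕ, 1 ≤ i → i ≤ 5 → 4 ≤ j → j ≤ 5 → ⁅e i, e j⁆ = 0 := by
    intro i j hi1 hi5 hj hj5
    rcases lt_trichotomy i j with h | h | h
    · exact hz i j hi1 h hj5 (by simp; omega)
    · subst h; exact lie_self _
    · rw [← lie_skew, hz j i (by omega) h hi5 (by simp; omega), neg_zero]
  have hbx : ∀ j : ℕ, 4 ≤ j → j ≤ 5 → ∀ z : L, ⁅z, e j⁆ = 0 := by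
    intro j hj hj5 z
    have h0 : LieAlgebra.ad ℂ L (e j) = 0 := b.ext fun i => by
      simp only [LieAlgebra.ad_apply, LinearMap.zero_apply]
      rw [← lie_skew, he i, hbz _ _ (by omega) (by omega) hj hj5, neg_zero]
    rw [← lie_skew]
    have : ⁅e j, z⁆ = (LieAlgebra.ad ℂ L (e j)) z := rfl
    rw [this, h0]
    simp
  -- brackets kill S45
  have hbkill : ∀ (w : L), w ∈ S45 → ∀ z : L, ⁅z, w⁆ = 0 := by
    intro w hw
    refine Submodule.span_induction ?_ ?_ ?_ ?_ hw
    · intro u hu z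
      rcases hu with h | h <;> subst h <;> exact hbx _ (by norm_num) (by norm_num) z
    · simp
    · intro u v _ _ hu hv z; rw [lie_add, hu, hv, add_zero]
    · intro c u _ hu z; rw [lie_smul, hu, smul_zero]
  refine ⟨hcomm, ?_, ?_⟩
  · intro x y z
    rw [hcomm (m x y) z, hmkill z _ (hS45le (hmS x y)), hmkill x _ (hS45le (hmS y z))]
  · intro x y z
    rw [hmkill z _ (hbS x y), smul_zero]
    rw [← lie_skew (m z x) y, hbkill _ (hmS z x) y, hbkill _ (hmS z y) x]
    simp
end

section
/- Let n ≥ 7 be odd and g = g^1_{(n,1)} the complex Lie algebra with nonzero brackets [e_1,e_i]=e_{i+1} (2≤i≤n−2), [e_i,e_{n−i}]=(−1)^i e_n (2≤i≤(n−1)/2). Define a commutative multiplication · by e_1·e_1 = e_2 + Σ_{j=3}^{n} α_j e_j, e_1·e_2 = 2β_1 e_{n−1} + β_2 e_n, e_1·e_3 = −(1/2)α_{n−2} e_n, e_1·e_j = ((−1)^j/2)α_{n−j+1} e_n for 4 ≤ j ≤ n−2, e_1·e_{n−1} = (1/2)e_n, e_2·e_2 = β_1 e_n, and all other products of basis elements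 zero. Then (g, ·, [-,-]) is a transposed Poisson algebra (it is the algebra TP_3(g^1_{(n,1)})). -/
/-- The multiplication TP_3(g^1_{(n,1)}) makes g^1_{(n,1)} (n ≥ 7 odd) a transposed
Poisson algebra. -/
theorem tp3_g1n1
    (n : ℕ) (hn : 7 ≤ n) (hodd : Odd n)
    (L : Type*) [LieRing L] [LieAlgebra ℂ L]
    (e : ℕ → L) (b : Module.Basis (Fin n) ℂ L)
    (hb : ∀ i : Fin n, e (i.1 + 1) = b i)
    (htab : ∀ i j : ℕ, 1 ≤ i → i < j → j ≤ n →
      ⁅e i, e j⁆ =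
        if i = 1 ∧ 2 ≤ j ∧ j ≤ n - 2 then e (j + 1)
        else if 2 ≤ i ∧ i + j = n then ((-1 : ℂ) ^ i) • e n
        else 0)
    (α : ℕ → ℂ) (β₁ β₂ : ℂ)
    (m : L →ₗ[ℂ] L →ₗ[ℂ] L)
    (hcomm : ∀ x y : L, m x y = m y x)
    (m11 : m (e 1) (e 1) = e 2 + ∑ j ∈ Finset.Icc 3 n, α j • e j)
    (m12 : m (e 1) (e 2) = (2 * β₁) • e (n - 1) + β₂ • e n)
    (m13 : m (e 1) (e 3) = (-(1 / 2 : ℂ) * α (n - 2)) • e n)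
    (m1j : ∀ j : ℕ, 4 ≤ j → j ≤ n - 2 →
      m (e 1) (e j) = ((-1 : ℂ) ^ j * (1 / 2 : ℂ) * α (n - j + 1)) • e n)
    (m1n1 : m (e 1) (e (n - 1)) = (1 / 2 : ℂ) • e n)
    (m22 : m (e 2) (e 2) = β₁ • e n)
    (mz : ∀ i j : ℕ, 1 ≤ i → i ≤ j → j ≤ n →
      ¬(i = 1 ∧ j ≤ n - 1) → ¬(i = 2 ∧ j = 2) → ¬(i = 1 ∧ j = n) →
        m (e i) (e j) = 0)
    (m1n : m (e 1) (e n) = 0) :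
    (∀ x y : L, m x y = m y x) ∧
    (∀ x y z : L, m (m x y) z = m x (m y z)) ∧
    (∀ x y z : L, (2 : ℂ) • m z ⁅x, y⁆ = ⁅m z x, y⁆ + ⁅x, m z y⁆) := by
  -- sum of brackets helper
  have sum_lie' : ∀ (s : Finset ℕ) (f : ℕ → L) (y : L),
      ⁅∑ j ∈ s, f j, y⁆ = ∑ j ∈ s, ⁅f j, y⁆ := by
    intro s f y
    induction s using Finset.cons_induction with
    | empty => simp
    | cons a s ha ih => rw [Finset.sum_cons, Finset.sum_cons, add_lie, ih]
  -- multiplication vanishing lemmas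
  have MZ : ∀ p q : ℕ, 2 ≤ p → 2 ≤ q → p ≤ n → q ≤ n → ¬(p = 2 ∧ q = 2) →
      m (e p) (e q) = 0 := by
    intro p q hp hq hpn hqn hne
    rcases le_total p q with h | h
    · exact mz p q (by omega) h hqn (by omega) (by omega) (by omega)
    · rw [hcomm]
      exact mz q p (by omega) h hpn (by omega) (by omega) (by omega)
  have Mn : ∀ p : ℕ, 1 ≤ p → p ≤ n → m (e p) (e n) = 0 := by
    intro p h1 h2
    by_cases hp1 : p = 1
    · rw [hp1]; exact m1n
    · exact MZ p n (by omega) (by omega) h2 le_rfl (by omega)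
  have Mn1 : ∀ p : ℕ, 2 ≤ p → p ≤ n → m (e p) (e (n - 1)) = 0 := fun p h1 h2 =>
    MZ p (n - 1) h1 (by omega) h2 (by omega) (by omega)
  have M1 : ∀ q : ℕ, 3 ≤ q → q ≤ n → ∃ d : ℂ, m (e 1) (e q) = d • e n := by
    intro q h3 hqn
    by_cases h : q = 3
    · rw [h]; exact ⟨_, m13⟩
    by_cases h2 : q ≤ n - 2
    · exact ⟨_, m1j q (by omega) h2⟩
    by_cases h4 : q = n - 1
    · rw [h4]; exact ⟨_, m1n1⟩
    · rw [show q = n by omega]; exact ⟨0, by rw [m1n, zero_smul]⟩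
  have M1' : ∀ q : ℕ, 2 ≤ q → q ≤ n → ∃ c d : ℂ,
      m (e 1) (e q) = c • e (n - 1) + d • e n := by
    intro q h2 hq
    by_cases h : q = 2
    · rw [h]; exact ⟨2 * β₁, β₂, m12⟩
    · obtain ⟨d, hd⟩ := M1 q (by omega) hq
      exact ⟨0, d, by rw [hd, zero_smul, zero_add]⟩
  -- associativity, key fundamental case
  have key1 : ∀ r : ℕ, 1 ≤ r → r ≤ n →
      m (m (e 1) (e 1)) (e r) = m (e 1) (m (e 1) (e r)) := by
    intro r h1 hr
    by_cases hr1 : r = 1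
    · rw [hr1]; exact hcomm _ _
    have hL : m (m (e 1) (e 1)) (e r) = m (e 2) (e r) := by
      rw [m11, map_add, LinearMap.add_apply]
      have hz : m (∑ j ∈ Finset.Icc 3 n, α j • e j) (e r) = 0 := by
        rw [map_sum, LinearMap.sum_apply]
        refine Finset.sum_eq_zero fun j hj => ?_
        rw [Finset.mem_Icc] at hj
        rw [map_smul, LinearMap.smul_apply,
          MZ j r (by omega) (by omega) hj.2 hr (by omega), smul_zero]
      rw [hz, add_zero]
    rw [hL]
    by_cases hr2 : r = 2
    · rw [hr2, m22, m12, map_add, map_smul, map_smul, m1n1, m1n, smul_zero,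
        add_zero, smul_smul, show 2 * β₁ * (1 / 2 : ℂ) = β₁ by ring]
    · obtain ⟨d, hd⟩ := M1 r (by omega) hr
      rw [MZ 2 r (by omega) (by omega) (by omega) hr (by omega), hd, map_smul,
        m1n, smul_zero]
  -- full associativity on basis-type elements
  have keyA : ∀ p q r : ℕ, 1 ≤ p → p ≤ n → 1 ≤ q → q ≤ n → 1 ≤ r → r ≤ n →
      m (m (e p) (e q)) (e r) = m (e p) (m (e q) (e r)) := by
    intro p q r hp1 hpn hq1 hqn hr1 hrn
    by_cases hp : p = 1
    · subst hp
      by_cases hq : q = 1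
      · subst hq; exact key1 r hr1 hrn
      by_cases hr : r = 1
      · subst hr
        rw [hcomm (e q) (e 1), hcomm (m (e 1) (e q)) (e 1)]
      · obtain ⟨c, d, hcd⟩ := M1' q (by omega) hqn
        have h1 : m (e (n - 1)) (e r) = 0 := by
          rw [hcomm]; exact Mn1 r (by omega) hrn
        have h2 : m (e n) (e r) = 0 := by
          rw [hcomm]; exact Mn r hr1 hrn
        rw [hcd]
        simp only [map_add, map_smul, LinearMap.add_apply, LinearMap.smul_apply,
          h1, h2, smul_zero, add_zero]
        by_cases hqr : q = 2 ∧ r = 2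
        · rw [hqr.1, hqr.2, m22, map_smul, m1n, smul_zero]
        · rw [MZ q r (by omega) (by omega) hqn hrn hqr, map_zero]
    · have hp2 : 2 ≤ p := by omega
      by_cases hq : q = 1
      · subst hq
        by_cases hr : r = 1
        · subst hr
          rw [hcomm (e p) (e 1), hcomm (m (e 1) (e p)) (e 1), ← key1 p hp1 hpn,
            hcomm (m (e 1) (e 1)) (e p)]
        · obtain ⟨c, d, hcd⟩ := M1' p hp2 hpn
          obtain ⟨c', d', hcd'⟩ := M1' r (by omega) hrn
          have h1 : m (e (n - 1)) (e r) = 0 := by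
            rw [hcomm]; exact Mn1 r (by omega) hrn
          have h2 : m (e n) (e r) = 0 := by
            rw [hcomm]; exact Mn r hr1 hrn
          rw [hcomm (e p) (e 1), hcd, hcd']
          simp only [map_add, map_smul, LinearMap.add_apply, LinearMap.smul_apply,
            h1, h2, Mn1 p hp2 hpn, Mn p hp1 hpn, smul_zero, add_zero]
      · have hq2 : 2 ≤ q := by omega
        have hL : m (m (e p) (e q)) (e r) = 0 := by
          by_cases hpq : p = 2 ∧ q = 2
          · rw [hpq.1, hpq.2, m22, map_smul, LinearMap.smul_apply,
              hcomm (e n) (e r), Mn r hr1 hrn, smul_zero]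
          · rw [MZ p q hp2 hq2 hpn hqn hpq, map_zero, LinearMap.zero_apply]
        rw [hL]
        by_cases hr : r = 1
        · subst hr
          obtain ⟨c, d, hcd⟩ := M1' q hq2 hqn
          rw [hcomm (e q) (e 1), hcd, map_add, map_smul, map_smul,
            Mn1 p hp2 hpn, Mn p hp1 hpn, smul_zero, smul_zero, add_zero]
        · by_cases hqr : q = 2 ∧ r = 2
          · rw [hqr.1, hqr.2, m22, map_smul, Mn p hp1 hpn, smul_zero]
          · rw [MZ q r hq2 (by omega) hqn hrn hqr, map_zero]
  -- bracket vanishing lemmas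
  have LEn : ∀ q : ℕ, 1 ≤ q → q ≤ n → ⁅e q, e n⁆ = 0 := by
    intro q h1 h2
    rcases lt_or_eq_of_le h2 with h | h
    · rw [htab q n h1 h le_rfl, if_neg (by omega), if_neg (by omega)]
    · rw [h]; exact lie_self _
  have LEn' : ∀ q : ℕ, 1 ≤ q → q ≤ n → ⁅e n, e q⁆ = 0 := fun q h1 h2 => by
    rw [← lie_skew, LEn q h1 h2, neg_zero]
  have LEn1 : ∀ q : ℕ, 2 ≤ q → q ≤ n → ⁅e q, e (n - 1)⁆ = 0 := by
    intro q h2 hq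
    rcases lt_trichotomy q (n - 1) with h | h | h
    · rw [htab q (n - 1) (by omega) h (by omega), if_neg (by omega),
        if_neg (by omega)]
    · rw [h]; exact lie_self _
    · rw [show q = n by omega, ← lie_skew, LEn (n - 1) (by omega) (by omega),
        neg_zero]
  have LEn1' : ∀ q : ℕ, 2 ≤ q → q ≤ n → ⁅e (n - 1), e q⁆ = 0 := fun q h2 hq => by
    rw [← lie_skew, LEn1 q h2 hq, neg_zero]
  have L1top : ⁅e 1, e (n - 1)⁆ = 0 := by
    rw [htab 1 (n - 1) le_rfl (by omega) (by omega), if_neg (by omega),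
      if_neg (by omega)]
  have L1n : ⁅e 1, e n⁆ = 0 := LEn 1 le_rfl (by omega)
  have L1q : ∀ q : ℕ, 2 ≤ q → q ≤ n - 2 → ⁅e 1, e q⁆ = e (q + 1) := by
    intro q h1 h2
    rw [htab 1 q le_rfl (by omega) (by omega), if_pos ⟨rfl, h1, h2⟩]
  have Lsum : ∀ q : ℕ, 2 ≤ q → q ≤ n → ∀ l : ℕ, 2 ≤ l → l ≤ n →
      ⁅e l, e q⁆ = if l + q = n then ((-1 : ℂ) ^ l) • e n else 0 := by
    intro q hq2 hqn l hl2 hln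
    by_cases h : l + q = n
    · rw [if_pos h]
      rcases lt_trichotomy l q with hlt | heq | hgt
      · rw [htab l q (by omega) hlt hqn, if_neg (by omega), if_pos ⟨hl2, h⟩]
      · exfalso; obtain ⟨k, hk⟩ := hodd; omega
      · rw [← lie_skew, htab q l (by omega) hgt hln, if_neg (by omega),
          if_pos ⟨hq2, by omega⟩]
        have hodd' : Odd (l + q) := by rw [h]; exact hodd
        have hpow : (-1 : ℂ) ^ l * (-1) ^ q = -1 := by
          rw [← pow_add]; exact Odd.neg_one_pow hodd'
        have hq2' : (-1 : ℂ) ^ q * (-1) ^ q = 1 := by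
          rw [← pow_add]; exact Even.neg_one_pow ⟨q, rfl⟩
        have hlq : (-1 : ℂ) ^ l = -(-1) ^ q := by
          linear_combination ((-1 : ℂ) ^ q) * hpow - ((-1 : ℂ) ^ l) * hq2'
        rw [hlq, neg_smul]
    · rw [if_neg h]
      rcases lt_trichotomy l q with hlt | heq | hgt
      · rw [htab l q (by omega) hlt hqn, if_neg (by omega), if_neg (by omega)]
      · rw [heq]; exact lie_self _
      · rw [← lie_skew, htab q l (by omega) hgt hln, if_neg (by omega),
          if_neg (by omega), neg_zero]
  have L2q : ∀ q : ℕ, 2 ≤ q → q ≤ n → ⁅e 2, e q⁆ = if 2 + q = n then e n else 0 := by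
    intro q h2 hq
    rw [Lsum q h2 hq 2 le_rfl (by omega)]
    by_cases h : 2 + q = n
    · rw [if_pos h, if_pos h]; norm_num
    · rw [if_neg h, if_neg h]
  -- the bracket of m(e1,e1) with e q
  have Bsum : ∀ q : ℕ, 2 ≤ q → q ≤ n →
      ⁅m (e 1) (e 1), e q⁆ = (if 2 + q = n then e n else 0) +
        (if n - q ∈ Finset.Icc 3 n then ((-1 : ℂ) ^ (n - q) * α (n - q)) • e n
         else 0) := by
    intro q hq2 hqn
    have hterm : ∀ j ∈ Finset.Icc 3 n, ⁅α j • e j, e q⁆ =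
        if j = n - q then ((-1 : ℂ) ^ j * α j) • e n else 0 := by
      intro j hj
      rw [Finset.mem_Icc] at hj
      rw [smul_lie, Lsum q hq2 hqn j (by omega) hj.2]
      by_cases h : j + q = n
      · rw [if_pos h, if_pos (by omega), smul_smul, mul_comm (α j)]
      · rw [if_neg h, if_neg (by omega), smul_zero]
    rw [m11, add_lie, L2q q hq2 hqn, sum_lie', Finset.sum_congr rfl hterm,
      Finset.sum_ite_eq']
  -- second RHS term in the main Poisson case
  have Rterm2 : ∀ q : ℕ, 2 ≤ q → q ≤ n → ⁅e 1, m (e 1) (e q)⁆ = 0 := by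
    intro q hq2 hqn
    obtain ⟨c, d, hcd⟩ := M1' q hq2 hqn
    rw [hcd, lie_add, lie_smul, lie_smul, L1top, L1n, smul_zero, smul_zero,
      add_zero]
  -- Poisson identity for ordered basis indices
  have keyB0 : ∀ p q r : ℕ, 1 ≤ p → p ≤ n → 1 ≤ q → q ≤ n → 1 ≤ r → r ≤ n →
      p ≤ q →
      (2 : ℂ) • m (e r) ⁅e p, e q⁆ = ⁅m (e r) (e p), e q⁆ + ⁅e p, m (e r) (e q)⁆ := by
    intro p q r hp1 hpn hq1 hqn hr1 hrn hpq
    by_cases hpqe : p = q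
    · subst hpqe
      rw [lie_self, map_zero, smul_zero, ← lie_skew (e p) (m (e r) (e p))]
      exact (add_neg_cancel _).symm
    have hlt : p < q := by omega
    have hq2 : 2 ≤ q := by omega
    -- LHS vanishes whenever r ≥ 2
    have hLgen : ∀ r' : ℕ, 2 ≤ r' → r' ≤ n → m (e r') ⁅e p, e q⁆ = 0 := by
      intro r' h2 hn'
      by_cases hp1' : p = 1
      · subst hp1'
        by_cases hq' : q ≤ n - 2
        · rw [L1q q hq2 hq']
          exact MZ r' (q + 1) h2 (by omega) hn' (by omega) (by omega)
        · have hb0 : ⁅e 1, e q⁆ = 0 := by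
            by_cases h : q = n - 1
            · rw [h]; exact L1top
            · rw [show q = n by omega]; exact L1n
          rw [hb0, map_zero]
      · rw [Lsum q hq2 hqn p (by omega) hpn]
        by_cases h : p + q = n
        · rw [if_pos h, map_smul, Mn r' (by omega) hn', smul_zero]
        · rw [if_neg h, map_zero]
    by_cases hr3 : 3 ≤ r
    · have hR1 : ⁅m (e r) (e p), e q⁆ = 0 := by
        by_cases hp1' : p = 1
        · subst hp1'
          obtain ⟨d, hd⟩ := M1 r hr3 hrn
          rw [hcomm (e r) (e 1), hd, smul_lie, LEn' q (by omega) hqn, smul_zero]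
        · rw [hcomm, MZ p r (by omega) (by omega) hpn hrn (by omega), zero_lie]
      have hR2 : ⁅e p, m (e r) (e q)⁆ = 0 := by
        rw [hcomm, MZ q r hq2 (by omega) hqn hrn (by omega), lie_zero]
      rw [hLgen r (by omega) hrn, smul_zero, hR1, hR2, add_zero]
    by_cases hr2 : r = 2
    · subst hr2
      by_cases hp1' : p = 1
      · subst hp1'
        have hA : ⁅m (e 2) (e 1), e q⁆ = 0 := by
          rw [hcomm, m12, add_lie, smul_lie, smul_lie, LEn1' q hq2 hqn,
            LEn' q (by omega) hqn, smul_zero, smul_zero, add_zero]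
        have hB : ⁅e 1, m (e 2) (e q)⁆ = 0 := by
          by_cases h : q = 2
          · rw [h, m22, lie_smul, L1n, smul_zero]
          · rw [MZ 2 q le_rfl hq2 (by omega) hqn (by omega), lie_zero]
        rw [hLgen 2 le_rfl (by omega), smul_zero, hA, hB, add_zero]
      · have hA : ⁅m (e 2) (e p), e q⁆ = 0 := by
          by_cases h : p = 2
          · rw [h, m22, smul_lie, LEn' q (by omega) hqn, smul_zero]
          · rw [MZ 2 p le_rfl (by omega) (by omega) hpn (by omega), zero_lie]
        have hB : ⁅e p, m (e 2) (e q)⁆ = 0 := by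
          rw [MZ 2 q le_rfl hq2 (by omega) hqn (by omega), lie_zero]
        rw [hLgen 2 le_rfl (by omega), smul_zero, hA, hB, add_zero]
    -- r = 1
    have hr1' : r = 1 := by omega
    subst hr1'
    by_cases hp1' : p = 1
    · subst hp1'
      rw [Bsum q hq2 hqn, Rterm2 q hq2 hqn, add_zero]
      by_cases hq' : q ≤ n - 2
      · rw [L1q q hq2 hq']
        by_cases hq3 : q = 2
        · subst hq3
          rw [show 2 + 1 = 3 by norm_num, m13, if_neg (by omega),
            if_pos (Finset.mem_Icc.mpr ⟨by omega, by omega⟩), zero_add,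
            show ((-1 : ℂ) ^ (n - 2)) = -1 from Odd.neg_one_pow
              (by obtain ⟨k, hk⟩ := hodd; exact ⟨k - 1, by omega⟩)]
          module
        · by_cases hq4 : q ≤ n - 3
          · rw [m1j (q + 1) (by omega) (by omega),
              show n - (q + 1) + 1 = n - q by omega, if_neg (by omega),
              if_pos (Finset.mem_Icc.mpr ⟨by omega, by omega⟩), zero_add]
            have h1 : (-1 : ℂ) ^ (n - q) * (-1) ^ (q + 1) = 1 := by
              rw [← pow_add, show n - q + (q + 1) = n + 1 by omega]
              exact Even.neg_one_pow (by obtain ⟨k, hk⟩ := hodd; exact ⟨k + 1, by omega⟩)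
            have h2 : (-1 : ℂ) ^ (q + 1) * (-1) ^ (q + 1) = 1 := by
              rw [← pow_add]; exact Even.neg_one_pow ⟨q + 1, rfl⟩
            have hpow : (-1 : ℂ) ^ (n - q) = (-1) ^ (q + 1) := by
              linear_combination ((-1 : ℂ) ^ (q + 1)) * h1 - ((-1 : ℂ) ^ (n - q)) * h2
            rw [hpow]
            module
          · rw [show q = n - 2 by omega, show n - 2 + 1 = n - 1 by omega, m1n1,
              if_pos (by omega), if_neg (by simp only [Finset.mem_Icc]; omega),
              add_zero]
            module
      · have hb0 : ⁅e 1, e q⁆ = 0 := by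
          by_cases h : q = n - 1
          · rw [h]; exact L1top
          · rw [show q = n by omega]; exact L1n
        rw [hb0, map_zero, smul_zero, if_neg (by omega),
          if_neg (by simp only [Finset.mem_Icc]; omega), add_zero]
    · have hp2 : 2 ≤ p := by omega
      rw [Lsum q hq2 hqn p hp2 hpn]
      have hL : m (e 1) (if p + q = n then ((-1 : ℂ) ^ p) • e n else 0) = 0 := by
        by_cases h : p + q = n
        · rw [if_pos h, map_smul, m1n, smul_zero]
        · rw [if_neg h, map_zero]
      rw [hL, smul_zero]
      obtain ⟨c, d, hcd⟩ := M1' p hp2 hpn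
      obtain ⟨c', d', hcd'⟩ := M1' q hq2 hqn
      rw [hcd, hcd', add_lie, lie_add, smul_lie, smul_lie, lie_smul, lie_smul,
        LEn1' q hq2 hqn, LEn' q (by omega) hqn, LEn1 p hp2 hpn, LEn p hp1 hpn,
        smul_zero, smul_zero, smul_zero, smul_zero, add_zero, add_zero]
  have keyB : ∀ p q r : ℕ, 1 ≤ p → p ≤ n → 1 ≤ q → q ≤ n → 1 ≤ r → r ≤ n →
      (2 : ℂ) • m (e r) ⁅e p, e q⁆ = ⁅m (e r) (e p), e q⁆ + ⁅e p, m (e r) (e q)⁆ := by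
    intro p q r hp1 hpn hq1 hqn hr1 hrn
    rcases le_total p q with h | h
    · exact keyB0 p q r hp1 hpn hq1 hqn hr1 hrn h
    · have h0 := keyB0 q p r hq1 hqn hp1 hpn hr1 hrn h
      rw [show ⁅e p, e q⁆ = -⁅e q, e p⁆ from (lie_skew (e p) (e q)).symm,
        show ⁅m (e r) (e p), e q⁆ = -⁅e q, m (e r) (e p)⁆ from
          (lie_skew (m (e r) (e p)) (e q)).symm,
        show ⁅e p, m (e r) (e q)⁆ = -⁅m (e r) (e q), e p⁆ from
          (lie_skew (e p) (m (e r) (e q))).symm,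
        map_neg, smul_neg, h0]
      abel
  have hmem : ∀ x : L, x ∈ Submodule.span ℂ (Set.range ⇑b) := fun x => by
    rw [b.span_eq]; exact Submodule.mem_top
  refine ⟨hcomm, ?_, ?_⟩
  · intro x y z
    refine Submodule.span_induction
      (p := fun x _ => ∀ y z : L, m (m x y) z = m x (m y z))
      ?_ ?_ ?_ ?_ (hmem x) y z
    · rintro x ⟨i, rfl⟩ y z
      refine Submodule.span_induction
        (p := fun y _ => ∀ z : L, m (m (b i) y) z = m (b i) (m y z))
        ?_ ?_ ?_ ?_ (hmem y) z
      · rintro y ⟨j, rfl⟩ z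
        refine Submodule.span_induction
          (p := fun z _ => m (m (b i) (b j)) z = m (b i) (m (b j) z))
          ?_ ?_ ?_ ?_ (hmem z)
        · rintro z ⟨k, rfl⟩
          rw [← hb i, ← hb j, ← hb k]
          exact keyA (i.1 + 1) (j.1 + 1) (k.1 + 1) (by omega) i.isLt (by omega)
            j.isLt (by omega) k.isLt
        · simp
        · intro z1 z2 _ _ h1 h2; simp [map_add, h1, h2]
        · intro a z1 _ h1; simp [map_smul, h1]
      · intro z; simp
      · intro y1 y2 _ _ h1 h2 z
        simp only [map_add, LinearMap.add_apply]
        rw [h1 z, h2 z]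
      · intro a y1 _ h1 z
        simp only [map_smul, LinearMap.smul_apply]
        rw [h1 z]
    · intro y z; simp
    · intro x1 x2 _ _ h1 h2 y z
      simp only [map_add, LinearMap.add_apply]
      rw [h1 y z, h2 y z]
    · intro a x1 _ h1 y z
      simp only [map_smul, LinearMap.smul_apply]
      rw [h1 y z]
  · intro x y z
    refine Submodule.span_induction
      (p := fun x _ => ∀ y z : L, (2 : ℂ) • m z ⁅x, y⁆ = ⁅m z x, y⁆ + ⁅x, m z y⁆)
      ?_ ?_ ?_ ?_ (hmem x) y z
    · rintro x ⟨i, rfl⟩ y z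
      refine Submodule.span_induction
        (p := fun y _ => ∀ z : L,
          (2 : ℂ) • m z ⁅b i, y⁆ = ⁅m z (b i), y⁆ + ⁅b i, m z y⁆)
        ?_ ?_ ?_ ?_ (hmem y) z
      · rintro y ⟨j, rfl⟩ z
        refine Submodule.span_induction
          (p := fun z _ =>
            (2 : ℂ) • m z ⁅b i, b j⁆ = ⁅m z (b i), b j⁆ + ⁅b i, m z (b j)⁆)
          ?_ ?_ ?_ ?_ (hmem z)
        · rintro z ⟨k, rfl⟩
          rw [← hb i, ← hb j, ← hb k]
          exact keyB (i.1 + 1) (j.1 + 1) (k.1 + 1) (by omega) i.isLt (by omega)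
            j.isLt (by omega) k.isLt
        · simp
        · intro z1 z2 _ _ h1 h2
          simp only [map_add, LinearMap.add_apply, smul_add, add_lie, lie_add]
          rw [h1, h2]
          abel
        · intro a z1 _ h1
          simp only [map_smul, LinearMap.smul_apply]
          simp only [smul_lie, lie_smul]
          rw [smul_comm (2 : ℂ) a, h1, smul_add]
      · intro z; simp
      · intro y1 y2 _ _ h1 h2 z
        simp only [lie_add, map_add, smul_add]
        rw [h1 z, h2 z]
        abel
      · intro a y1 _ h1 z
        simp only [lie_smul, map_smul]
        rw [smul_comm (2 : ℂ) a, h1 z, smul_add]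
    · intro y z; simp
    · intro x1 x2 _ _ h1 h2 y z
      simp only [add_lie, map_add, smul_add]
      rw [h1 y z, h2 y z]
      abel
    · intro a x1 _ h1 y z
      simp only [smul_lie, map_smul]
      rw [smul_comm (2 : ℂ) a, h1 y z, smul_add]
end

section
/- Let g = g^2_{(5,1)} be the 5-dimensional complex Lie algebra with nonzero brackets [e_1,e_2]=e_3, [e_1,e_3]=e_4, [e_2,e_5]=e_4. Then every 1/2-derivation φ of g has the form φ(e_1)=α_1e_1+α_2e_2+α_3e_3+α_4e_4+α_5e_5, φ(e_2)=β_2e_2+β_3e_3+β_4e_4+β_5e_5, φ(e_3)=(1/2)(α_1+β_2)e_3+(1/2)(β_3−α_5)e_4, φ(e_4)=(1/4)(3α_1+β_2)e_4, φ(e_5)=−α_2e_3+γ_4e_4+(1/2)(3α_1−β_2)e_5, for some scalars α_i, β_i, γ_4; and conversely every such map is a 1/2-derivation. -/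
/-- Description of all 1/2-derivations of g^2_{(5,1)}. -/
theorem g251_half_derivations
    (L : Type*) [LieRing L] [LieAlgebra ℂ L]
    (e : ℕ → L) (b : Module.Basis (Fin 5) ℂ L)
    (hb : ∀ i : Fin 5, e (i.1 + 1) = b i)
    (h12 : ⁅e 1, e 2⁆ = e 3) (h13 : ⁅e 1, e 3⁆ = e 4) (h25 : ⁅e 2, e 5⁆ = e 4)
    (hz : ∀ i j : ℕ, 1 ≤ i → i < j → j ≤ 5 →
      ((i, j) ∉ ({(1, 2), (1, 3), (2, 5)} : Set (ℕ × ℕ))) → ⁅e i, e j⁆ = 0)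
    (φ : L →ₗ[ℂ] L) :
    (∀ x y : L, φ ⁅x, y⁆ = (2 : ℂ)⁻¹ • (⁅φ x, y⁆ + ⁅x, φ y⁆)) ↔
    (∃ (α β : ℕ → ℂ) (γ : ℂ),
      φ (e 1) = α 1 • e 1 + α 2 • e 2 + α 3 • e 3 + α 4 • e 4 + α 5 • e 5 ∧
      φ (e 2) = β 2 • e 2 + β 3 • e 3 + β 4 • e 4 + β 5 • e 5 ∧
      φ (e 3) = ((1 / 2 : ℂ) * (α 1 + β 2)) • e 3 + ((1 / 2 : ℂ) * (β 3 - α 5)) • e 4 ∧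
      φ (e 4) = ((1 / 4 : ℂ) * (3 * α 1 + β 2)) • e 4 ∧
      φ (e 5) = (-α 2) • e 3 + γ • e 4 + ((1 / 2 : ℂ) * (3 * α 1 - β 2)) • e 5) := by
  -- identify e with b
  have he1 : e 1 = b 0 := hb 0
  have he2 : e 2 = b 1 := hb 1
  have he3 : e 3 = b 2 := hb 2
  have he4 : e 4 = b 3 := hb 3
  have he5 : e 5 = b 4 := hb 4
  -- bracket table
  have t01 : ⁅b 0, b 1⁆ = b 2 := by rw [← he1, ← he2, ← he3]; exact h12
  have t02 : ⁅b 0, b 2⁆ = b 3 := by rw [← he1, ← he3, ← he4]; exact h13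
  have t14 : ⁅b 1, b 4⁆ = b 3 := by rw [← he2, ← he5, ← he4]; exact h25
  have t03 : ⁅b 0, b 3⁆ = 0 := by rw [← he1, ← he4]; exact hz 1 4 (by norm_num) (by norm_num) (by norm_num) (by simp)
  have t04 : ⁅b 0, b 4⁆ = 0 := by rw [← he1, ← he5]; exact hz 1 5 (by norm_num) (by norm_num) (by norm_num) (by simp)
  have t12 : ⁅b 1, b 2⁆ = 0 := by rw [← he2, ← he3]; exact hz 2 3 (by norm_num) (by norm_num) (by norm_num) (by simp)
  have t13 : ⁅b 1, b 3⁆ = 0 := by rw [← he2, ← he4]; exact hz 2 4 (by norm_num) (by norm_num) (by norm_num) (by simp)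
  have t23 : ⁅b 2, b 3⁆ = 0 := by rw [← he3, ← he4]; exact hz 3 4 (by norm_num) (by norm_num) (by norm_num) (by simp)
  have t24 : ⁅b 2, b 4⁆ = 0 := by rw [← he3, ← he5]; exact hz 3 5 (by norm_num) (by norm_num) (by norm_num) (by simp)
  have t34 : ⁅b 3, b 4⁆ = 0 := by rw [← he4, ← he5]; exact hz 4 5 (by norm_num) (by norm_num) (by norm_num) (by simp)
  have t10 : ⁅b 1, b 0⁆ = -b 2 := by rw [← lie_skew, t01]
  have t20 : ⁅b 2, b 0⁆ = -b 3 := by rw [← lie_skew, t02]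
  have t41 : ⁅b 4, b 1⁆ = -b 3 := by rw [← lie_skew, t14]
  have t30 : ⁅b 3, b 0⁆ = 0 := by rw [← lie_skew, t03, neg_zero]
  have t40 : ⁅b 4, b 0⁆ = 0 := by rw [← lie_skew, t04, neg_zero]
  have t21 : ⁅b 2, b 1⁆ = 0 := by rw [← lie_skew, t12, neg_zero]
  have t31 : ⁅b 3, b 1⁆ = 0 := by rw [← lie_skew, t13, neg_zero]
  have t32 : ⁅b 3, b 2⁆ = 0 := by rw [← lie_skew, t23, neg_zero]
  have t42 : ⁅b 4, b 2⁆ = 0 := by rw [← lie_skew, t24, neg_zero]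
  have t43 : ⁅b 4, b 3⁆ = 0 := by rw [← lie_skew, t34, neg_zero]
  rw [he1, he2, he3, he4, he5]
  constructor
  · intro H
    set a : Fin 5 → ℂ := fun i => b.repr (φ (b 0)) i with ha_def
    set d : Fin 5 → ℂ := fun i => b.repr (φ (b 1)) i with hd_def
    set f : Fin 5 → ℂ := fun i => b.repr (φ (b 4)) i with hf_def
    have ha : φ (b 0) = a 0 • b 0 + a 1 • b 1 + a 2 • b 2 + a 3 • b 3 + a 4 • b 4 := by
      have h := b.sum_repr (φ (b 0)); rw [Fin.sum_univ_five] at h; exact h.symm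
    have hd : φ (b 1) = d 0 • b 0 + d 1 • b 1 + d 2 • b 2 + d 3 • b 3 + d 4 • b 4 := by
      have h := b.sum_repr (φ (b 1)); rw [Fin.sum_univ_five] at h; exact h.symm
    have hf : φ (b 4) = f 0 • b 0 + f 1 • b 1 + f 2 • b 2 + f 3 • b 3 + f 4 • b 4 := by
      have h := b.sum_repr (φ (b 4)); rw [Fin.sum_univ_five] at h; exact h.symm
    -- φ(b 2) from pair (e1, e2)
    have E3 : φ (b 2) = ((1 / 2 : ℂ) * (a 0 + d 1)) • b 2 + ((1 / 2 : ℂ) * (d 2 - a 4)) • b 3 := by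
      have h := H (b 0) (b 1)
      rw [t01, ha, hd] at h
      simp only [add_lie, lie_add, smul_lie, lie_smul, lie_self, t01, t02, t03, t04, t10, t12,
        t13, t14, t20, t21, t23, t24, t30, t31, t32, t34, t40, t41, t42, t43, smul_zero,
        zero_add, add_zero, smul_neg, smul_add] at h
      rw [h]; module
    -- φ(b 3) from pair (e1, e3)
    have E4 : φ (b 3) = ((1 / 4 : ℂ) * (3 * a 0 + d 1)) • b 3 := by
      have h := H (b 0) (b 2)
      rw [t02, ha, E3] at h
      simp only [add_lie, lie_add, smul_lie, lie_smul, lie_self, t01, t02, t03, t04, t10, t12,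
        t13, t14, t20, t21, t23, t24, t30, t31, t32, t34, t40, t41, t42, t43, smul_zero,
        zero_add, add_zero, smul_neg, smul_add] at h
      rw [h]; module
    -- d 0 = 0 from pair (e2, e3)
    have hd0 : d 0 = 0 := by
      have h := H (b 1) (b 2)
      rw [t12, map_zero, hd, E3] at h
      simp only [add_lie, lie_add, smul_lie, lie_smul, lie_self, t01, t02, t03, t04, t10, t12,
        t13, t14, t20, t21, t23, t24, t30, t31, t32, t34, t40, t41, t42, t43, smul_zero,
        zero_add, add_zero, smul_neg, smul_add] at h
      have h3 := congrArg (fun v => b.repr v 3) h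
      simp (config := { decide := true }) only [map_zero, map_add, map_smul, map_neg,
        Module.Basis.repr_self, Finsupp.coe_zero, Finsupp.coe_add, Finsupp.coe_smul, Pi.zero_apply,
        Pi.add_apply, Pi.smul_apply, Finsupp.single_apply, Finsupp.coe_neg, Pi.neg_apply,
        smul_eq_mul] at h3
      norm_num at h3
      exact h3
    -- constraints on φ(b 4) from pairs (e1,e5) and (e2,e5)
    have h15 := H (b 0) (b 4)
    rw [t04, map_zero, ha, hf] at h15
    simp only [add_lie, lie_add, smul_lie, lie_smul, lie_self, t01, t02, t03, t04, t10, t12,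
      t13, t14, t20, t21, t23, t24, t30, t31, t32, t34, t40, t41, t42, t43, smul_zero,
      zero_add, add_zero, smul_neg, smul_add] at h15
    have h25' := H (b 1) (b 4)
    rw [t14, hd, hf, E4] at h25'
    simp only [add_lie, lie_add, smul_lie, lie_smul, lie_self, t01, t02, t03, t04, t10, t12,
      t13, t14, t20, t21, t23, t24, t30, t31, t32, t34, t40, t41, t42, t43, smul_zero,
      zero_add, add_zero, smul_neg, smul_add] at h25'
    have hf1 : f 1 = 0 := by
      have h2 := congrArg (fun v => b.repr v 2) h15
      simp (config := { decide := true }) only [map_zero, map_add, map_smul, map_neg,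
        Module.Basis.repr_self, Finsupp.coe_zero, Finsupp.coe_add, Finsupp.coe_smul, Pi.zero_apply,
        Pi.add_apply, Pi.smul_apply, Finsupp.single_apply, Finsupp.coe_neg, Pi.neg_apply,
        smul_eq_mul] at h2
      norm_num at h2
      exact h2
    have hf2 : f 2 = -a 1 := by
      have h3 := congrArg (fun v => b.repr v 3) h15
      simp (config := { decide := true }) only [map_zero, map_add, map_smul, map_neg,
        Module.Basis.repr_self, Finsupp.coe_zero, Finsupp.coe_add, Finsupp.coe_smul, Pi.zero_apply,
        Pi.add_apply, Pi.smul_apply, Finsupp.single_apply, Finsupp.coe_neg, Pi.neg_apply,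
        smul_eq_mul] at h3
      norm_num at h3
      linear_combination -2 * h3
    have hf0 : f 0 = 0 := by
      have h2 := congrArg (fun v => b.repr v 2) h25'
      simp (config := { decide := true }) only [map_zero, map_add, map_smul, map_neg,
        Module.Basis.repr_self, Finsupp.coe_zero, Finsupp.coe_add, Finsupp.coe_smul, Pi.zero_apply,
        Pi.add_apply, Pi.smul_apply, Finsupp.single_apply, Finsupp.coe_neg, Pi.neg_apply,
        smul_eq_mul] at h2
      norm_num at h2
      exact h2
    have hf4 : f 4 = (1 / 2 : ℂ) * (3 * a 0 - d 1) := by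
      have h3 := congrArg (fun v => b.repr v 3) h25'
      simp (config := { decide := true }) only [map_zero, map_add, map_smul, map_neg,
        Module.Basis.repr_self, Finsupp.coe_zero, Finsupp.coe_add, Finsupp.coe_smul, Pi.zero_apply,
        Pi.add_apply, Pi.smul_apply, Finsupp.single_apply, Finsupp.coe_neg, Pi.neg_apply,
        smul_eq_mul] at h3
      norm_num at h3
      linear_combination -2 * h3
    have hd' : φ (b 1) = d 1 • b 1 + d 2 • b 2 + d 3 • b 3 + d 4 • b 4 := by
      rw [hd, hd0]; module
    have hf' : φ (b 4) = (-(a 1)) • b 2 + f 3 • b 3 + ((1 / 2 : ℂ) * (3 * a 0 - d 1)) • b 4 := by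
      rw [hf, hf0, hf1, hf2, hf4]; module
    exact ⟨fun n => [0, a 0, a 1, a 2, a 3, a 4].getD n 0,
           fun n => [0, 0, d 1, d 2, d 3, d 4].getD n 0, f 3, ha, hd', E3, E4, hf'⟩
  · rintro ⟨α, β, γ, h1, h2, h3, h4, h5⟩
    intro x y
    have m0 : (⟨0, by norm_num⟩ : Fin 5) = 0 := rfl
    have m1 : (⟨1, by norm_num⟩ : Fin 5) = 1 := rfl
    have m2 : (⟨2, by norm_num⟩ : Fin 5) = 2 := rfl
    have m3 : (⟨3, by norm_num⟩ : Fin 5) = 3 := rfl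
    have m4 : (⟨4, by norm_num⟩ : Fin 5) = 4 := rfl
    have key : ∀ i j : Fin 5, φ ⁅b i, b j⁆ =
        (2 : ℂ)⁻¹ • (⁅φ (b i), b j⁆ + ⁅b i, φ (b j)⁆) := by
      intro i j
      fin_cases i <;> fin_cases j <;>
        simp only [m0, m1, m2, m3, m4, lie_self, map_zero, t01, t02, t03, t04, t10, t12, t13,
          t14, t20, t21, t23, t24, t30, t31, t32, t34, t40, t41, t42, t43, h1, h2, h3, h4, h5,
          map_neg, lie_neg, neg_lie, lie_add, add_lie, lie_smul, smul_lie, smul_zero, zero_add,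
          add_zero, lie_zero, zero_lie, smul_neg, smul_add, neg_smul, Fin.isValue] <;>
        module
    let F : L →ₗ[ℂ] L →ₗ[ℂ] L := LinearMap.mk₂ ℂ (fun x y => φ ⁅x, y⁆)
      (fun m n y => by simp only [add_lie, map_add])
      (fun c m y => by simp only [smul_lie, map_smul])
      (fun m y z => by simp only [lie_add, map_add])
      (fun c m y => by simp only [lie_smul, map_smul])
    let G : L →ₗ[ℂ] L →ₗ[ℂ] L := LinearMap.mk₂ ℂ
      (fun x y => (2 : ℂ)⁻¹ • (⁅φ x, y⁆ + ⁅x, φ y⁆))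
      (fun m n y => by simp only [map_add, add_lie, lie_add]; module)
      (fun c m y => by simp only [map_smul, smul_lie, lie_smul]; module)
      (fun m y z => by simp only [map_add, lie_add, add_lie]; module)
      (fun c m y => by simp only [map_smul, lie_smul, smul_lie]; module)
    have hFG : F = G := LinearMap.ext_basis b b fun i j => key i j
    exact LinearMap.congr_fun (LinearMap.congr_fun hFG x) y
end

section
/- Let g = g^2_{(6,1)} be the 6-dimensional complex Lie algebra with nonzero brackets [e_1,e_i]=e_{i+1} (2≤i≤4), [e_2,e_6]=e_4, [e_3,e_6]=e_5. Define a commutative multiplication · on g by e_1·e_1 = α_3 e_4 + α_4 e_5, e_1·e_2 = α_6 e_4 + α_7 e_5, e_1·e_3 = (1/2)α_6 e_5, e_1·e_6 = α_8 e_5, e_2·e_2 = α_9 e_4 + α_{10} e_5, e_2·e_3 = (1/2)α_9 e_5, e_2·e_6 = α_{11} e_5, e_6·e_6 = α_{12} e_5, all other products of basis elements zero. Then (g, ·, [-,-]) is a transposed Poisson algebra for all choices of the scalars α_3, α_4, α_6,…,α_{12}. -/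
set_option maxHeartbeats 4000000


/-- The multiplication TP_3(g^2_{(6,1)}) makes g^2_{(6,1)} a transposed Poisson algebra. -/
theorem tp3_g261
    (L : Type*) [LieRing L] [LieAlgebra ℂ L]
    (e : ℕ → L) (b : Module.Basis (Fin 6) ℂ L)
    (hb : ∀ i : Fin 6, e (i.1 + 1) = b i)
    (h12 : ⁅e 1, e 2⁆ = e 3) (h13 : ⁅e 1, e 3⁆ = e 4) (h14 : ⁅e 1, e 4⁆ = e 5)
    (h26 : ⁅e 2, e 6⁆ = e 4) (h36 : ⁅e 3, e 6⁆ = e 5)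
    (hz : ∀ i j : ℕ, 1 ≤ i → i < j → j ≤ 6 →
      ((i, j) ∉ ({(1, 2), (1, 3), (1, 4), (2, 6), (3, 6)} : Set (ℕ × ℕ))) →
        ⁅e i, e j⁆ = 0)
    (α₃ α₄ α₆ α₇ α₈ α₉ α₁₀ α₁₁ α₁₂ : ℂ)
    (m : L →ₗ[ℂ] L →ₗ[ℂ] L)
    (hcomm : ∀ x y : L, m x y = m y x)
    (m11 : m (e 1) (e 1) = α₃ • e 4 + α₄ • e 5)
    (m12 : m (e 1) (e 2) = α₆ • e 4 + α₇ • e 5)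
    (m13 : m (e 1) (e 3) = ((1 / 2 : ℂ) * α₆) • e 5)
    (m16 : m (e 1) (e 6) = α₈ • e 5)
    (m22 : m (e 2) (e 2) = α₉ • e 4 + α₁₀ • e 5)
    (m23 : m (e 2) (e 3) = ((1 / 2 : ℂ) * α₉) • e 5)
    (m26 : m (e 2) (e 6) = α₁₁ • e 5)
    (m66 : m (e 6) (e 6) = α₁₂ • e 5)
    (mz : ∀ i j : ℕ, 1 ≤ i → i ≤ j → j ≤ 6 →
      ((i, j) ∉ ({(1, 1), (1, 2), (1, 3), (1, 6), (2, 2), (2, 3), (2, 6), (6, 6)}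
        : Set (ℕ × ℕ))) → m (e i) (e j) = 0) :
    (∀ x y : L, m x y = m y x) ∧
    (∀ x y z : L, m (m x y) z = m x (m y z)) ∧
    (∀ x y z : L, (2 : ℂ) • m z ⁅x, y⁆ = ⁅m z x, y⁆ + ⁅x, m z y⁆) := by
  have LB11 : ⁅e 1, e 1⁆ = 0 := lie_self _
  have LB12 : ⁅e 1, e 2⁆ = e 3 := h12
  have LB13 : ⁅e 1, e 3⁆ = e 4 := h13
  have LB14 : ⁅e 1, e 4⁆ = e 5 := h14
  have LB15 : ⁅e 1, e 5⁆ = 0 := hz 1 5 (by norm_num) (by norm_num) (by norm_num) (by simp)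
  have LB16 : ⁅e 1, e 6⁆ = 0 := hz 1 6 (by norm_num) (by norm_num) (by norm_num) (by simp)
  have LB21 : ⁅e 2, e 1⁆ = -(e 3) := by rw [← lie_skew, LB12]
  have LB22 : ⁅e 2, e 2⁆ = 0 := lie_self _
  have LB23 : ⁅e 2, e 3⁆ = 0 := hz 2 3 (by norm_num) (by norm_num) (by norm_num) (by simp)
  have LB24 : ⁅e 2, e 4⁆ = 0 := hz 2 4 (by norm_num) (by norm_num) (by norm_num) (by simp)
  have LB25 : ⁅e 2, e 5⁆ = 0 := hz 2 5 (by norm_num) (by norm_num) (by norm_num) (by simp)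
  have LB26 : ⁅e 2, e 6⁆ = e 4 := h26
  have LB31 : ⁅e 3, e 1⁆ = -(e 4) := by rw [← lie_skew, LB13]
  have LB32 : ⁅e 3, e 2⁆ = 0 := by rw [← lie_skew, LB23, neg_zero]
  have LB33 : ⁅e 3, e 3⁆ = 0 := lie_self _
  have LB34 : ⁅e 3, e 4⁆ = 0 := hz 3 4 (by norm_num) (by norm_num) (by norm_num) (by simp)
  have LB35 : ⁅e 3, e 5⁆ = 0 := hz 3 5 (by norm_num) (by norm_num) (by norm_num) (by simp)
  have LB36 : ⁅e 3, e 6⁆ = e 5 := h36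
  have LB41 : ⁅e 4, e 1⁆ = -(e 5) := by rw [← lie_skew, LB14]
  have LB42 : ⁅e 4, e 2⁆ = 0 := by rw [← lie_skew, LB24, neg_zero]
  have LB43 : ⁅e 4, e 3⁆ = 0 := by rw [← lie_skew, LB34, neg_zero]
  have LB44 : ⁅e 4, e 4⁆ = 0 := lie_self _
  have LB45 : ⁅e 4, e 5⁆ = 0 := hz 4 5 (by norm_num) (by norm_num) (by norm_num) (by simp)
  have LB46 : ⁅e 4, e 6⁆ = 0 := hz 4 6 (by norm_num) (by norm_num) (by norm_num) (by simp)
  have LB51 : ⁅e 5, e 1⁆ = 0 := by rw [← lie_skew, LB15, neg_zero]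
  have LB52 : ⁅e 5, e 2⁆ = 0 := by rw [← lie_skew, LB25, neg_zero]
  have LB53 : ⁅e 5, e 3⁆ = 0 := by rw [← lie_skew, LB35, neg_zero]
  have LB54 : ⁅e 5, e 4⁆ = 0 := by rw [← lie_skew, LB45, neg_zero]
  have LB55 : ⁅e 5, e 5⁆ = 0 := lie_self _
  have LB56 : ⁅e 5, e 6⁆ = 0 := hz 5 6 (by norm_num) (by norm_num) (by norm_num) (by simp)
  have LB61 : ⁅e 6, e 1⁆ = 0 := by rw [← lie_skew, LB16, neg_zero]
  have LB62 : ⁅e 6, e 2⁆ = -(e 4) := by rw [← lie_skew, LB26]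
  have LB63 : ⁅e 6, e 3⁆ = -(e 5) := by rw [← lie_skew, LB36]
  have LB64 : ⁅e 6, e 4⁆ = 0 := by rw [← lie_skew, LB46, neg_zero]
  have LB65 : ⁅e 6, e 5⁆ = 0 := by rw [← lie_skew, LB56, neg_zero]
  have LB66 : ⁅e 6, e 6⁆ = 0 := lie_self _
  have MM11 : m (e 1) (e 1) = α₃ • e 4 + α₄ • e 5 := m11
  have MM12 : m (e 1) (e 2) = α₆ • e 4 + α₇ • e 5 := m12
  have MM13 : m (e 1) (e 3) = ((1 / 2 : ℂ) * α₆) • e 5 := m13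
  have MM14 : m (e 1) (e 4) = 0 := mz 1 4 (by norm_num) (by norm_num) (by norm_num) (by simp)
  have MM15 : m (e 1) (e 5) = 0 := mz 1 5 (by norm_num) (by norm_num) (by norm_num) (by simp)
  have MM16 : m (e 1) (e 6) = α₈ • e 5 := m16
  have MM21 : m (e 2) (e 1) = α₆ • e 4 + α₇ • e 5 := by rw [hcomm, MM12]
  have MM22 : m (e 2) (e 2) = α₉ • e 4 + α₁₀ • e 5 := m22
  have MM23 : m (e 2) (e 3) = ((1 / 2 : ℂ) * α₉) • e 5 := m23
  have MM24 : m (e 2) (e 4) = 0 := mz 2 4 (by norm_num) (by norm_num) (by norm_num) (by simp)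
  have MM25 : m (e 2) (e 5) = 0 := mz 2 5 (by norm_num) (by norm_num) (by norm_num) (by simp)
  have MM26 : m (e 2) (e 6) = α₁₁ • e 5 := m26
  have MM31 : m (e 3) (e 1) = ((1 / 2 : ℂ) * α₆) • e 5 := by rw [hcomm, MM13]
  have MM32 : m (e 3) (e 2) = ((1 / 2 : ℂ) * α₉) • e 5 := by rw [hcomm, MM23]
  have MM33 : m (e 3) (e 3) = 0 := mz 3 3 (by norm_num) (by norm_num) (by norm_num) (by simp)
  have MM34 : m (e 3) (e 4) = 0 := mz 3 4 (by norm_num) (by norm_num) (by norm_num) (by simp)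
  have MM35 : m (e 3) (e 5) = 0 := mz 3 5 (by norm_num) (by norm_num) (by norm_num) (by simp)
  have MM36 : m (e 3) (e 6) = 0 := mz 3 6 (by norm_num) (by norm_num) (by norm_num) (by simp)
  have MM41 : m (e 4) (e 1) = 0 := by rw [hcomm, MM14]
  have MM42 : m (e 4) (e 2) = 0 := by rw [hcomm, MM24]
  have MM43 : m (e 4) (e 3) = 0 := by rw [hcomm, MM34]
  have MM44 : m (e 4) (e 4) = 0 := mz 4 4 (by norm_num) (by norm_num) (by norm_num) (by simp)
  have MM45 : m (e 4) (e 5) = 0 := mz 4 5 (by norm_num) (by norm_num) (by norm_num) (by simp)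
  have MM46 : m (e 4) (e 6) = 0 := mz 4 6 (by norm_num) (by norm_num) (by norm_num) (by simp)
  have MM51 : m (e 5) (e 1) = 0 := by rw [hcomm, MM15]
  have MM52 : m (e 5) (e 2) = 0 := by rw [hcomm, MM25]
  have MM53 : m (e 5) (e 3) = 0 := by rw [hcomm, MM35]
  have MM54 : m (e 5) (e 4) = 0 := by rw [hcomm, MM45]
  have MM55 : m (e 5) (e 5) = 0 := mz 5 5 (by norm_num) (by norm_num) (by norm_num) (by simp)
  have MM56 : m (e 5) (e 6) = 0 := mz 5 6 (by norm_num) (by norm_num) (by norm_num) (by simp)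
  have MM61 : m (e 6) (e 1) = α₈ • e 5 := by rw [hcomm, MM16]
  have MM62 : m (e 6) (e 2) = α₁₁ • e 5 := by rw [hcomm, MM26]
  have MM63 : m (e 6) (e 3) = 0 := by rw [hcomm, MM36]
  have MM64 : m (e 6) (e 4) = 0 := by rw [hcomm, MM46]
  have MM65 : m (e 6) (e 5) = 0 := by rw [hcomm, MM56]
  have MM66 : m (e 6) (e 6) = α₁₂ • e 5 := m66
  have hbe : ∀ i : Fin 6, b i = e (i.1 + 1) := fun i => (hb i).symm
  have hgen : ∀ P : L → Prop, (∀ u v, P u → P v → P (u + v)) →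
      (∀ (c : ℂ) (u : L), P u → P (c • u)) → (∀ i : Fin 6, P (b i)) → ∀ x, P x := by
    intro P hadd hsmul hbase x
    have h0 : P 0 := by simpa using hsmul 0 (b 0) (hbase 0)
    rw [← b.sum_repr x]
    exact Finset.sum_induction _ P hadd h0 (fun i _ => hsmul _ _ (hbase i))
  have col : ∀ x : L, m x (e 4) = 0 ∧ m x (e 5) = 0 := by
    refine hgen (fun x => m x (e 4) = 0 ∧ m x (e 5) = 0) ?_ ?_ ?_
    · intro u v hu hv
      constructor <;> simp only [map_add, LinearMap.add_apply, hu.1, hu.2, hv.1, hv.2, add_zero]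
    · intro c u hu
      constructor <;> simp only [map_smul, LinearMap.smul_apply, hu.1, hu.2, smul_zero]
    · intro i
      rw [hbe i]
      rcases i with ⟨i, hi⟩
      interval_cases i <;>
        exact ⟨by simp only [Nat.reduceAdd, LB11, LB12, LB13, LB14, LB15, LB16, LB21, LB22, LB23, LB24, LB25, LB26, LB31, LB32, LB33, LB34, LB35, LB36, LB41, LB42, LB43, LB44, LB45, LB46, LB51, LB52, LB53, LB54, LB55, LB56, LB61, LB62, LB63, LB64, LB65, LB66, MM11, MM12, MM13, MM14, MM15, MM16, MM21, MM22, MM23, MM24, MM25, MM26, MM31, MM32, MM33, MM34, MM35, MM36, MM41, MM42, MM43, MM44, MM45, MM46, MM51, MM52, MM53, MM54, MM55, MM56, MM61, MM62, MM63, MM64, MM65, MM66], by simp only [Nat.reduceAdd, LB11, LB12, LB13, LB14, LB15, LB16, LB21, LB22, LB23, LB24, LB25, LB26, LB31, LB32, LB33, LB34, LB35, LB36, LB41, LB42, LB43, LB44, LB45, LB46, LB51, LB52, LB53, LB54, LB55, LB56, LB61, LB62, LB63, LB64, LB65, LB66, MM11, MM12, MM13, MM14, MM15, MM16, MM21, MM22,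 MM23, MM24, MM25, MM26, MM31, MM32, MM33, MM34, MM35, MM36, MM41, MM42, MM43, MM44, MM45, MM46, MM51, MM52, MM53, MM54, MM55, MM56, MM61, MM62, MM63, MM64, MM65, MM66]⟩
  have key : ∀ x y z : L, m x (m y z) = 0 := by
    intro x
    refine hgen (fun y => ∀ z, m x (m y z) = 0) ?_ ?_ ?_
    · intro u v hu hv z
      simp only [map_add, LinearMap.add_apply, hu z, hv z, add_zero]
    · intro c u hu z
      simp only [map_smul, LinearMap.smul_apply, hu z, smul_zero]
    · intro i
      refine hgen (fun z => m x (m (b i) z) = 0) ?_ ?_ ?_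
      · intro u v hu hv
        simp only [map_add, hu, hv, add_zero]
      · intro c u hu
        simp only [map_smul, hu, smul_zero]
      · intro j
        rw [hbe i, hbe j]
        rcases i with ⟨i, hi⟩; rcases j with ⟨j, hj⟩
        interval_cases i <;> interval_cases j <;>
          simp only [Nat.reduceAdd, LB11, LB12, LB13, LB14, LB15, LB16, LB21, LB22, LB23, LB24, LB25, LB26, LB31, LB32, LB33, LB34, LB35, LB36, LB41, LB42, LB43, LB44, LB45, LB46, LB51, LB52, LB53, LB54, LB55, LB56, LB61, LB62, LB63, LB64, LB65, LB66, MM11, MM12, MM13, MM14, MM15, MM16, MM21, MM22, MM23, MM24, MM25, MM26, MM31, MM32, MM33, MM34, MM35, MM36, MM41, MM42, MM43, MM44, MM45, MM46, MM51, MM52, MM53, MM54, MM55, MM56, MM61, MM62, MM63, MM64, MM65, MM66, map_add, map_smul, map_zero,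
            (col x).1, (col x).2, smul_zero, add_zero]
  refine ⟨hcomm, fun x y z => ?_, ?_⟩
  · rw [hcomm (m x y) z, key z x y, key x y z]
  · refine hgen (fun x => ∀ y z, (2 : ℂ) • m z ⁅x, y⁆ = ⁅m z x, y⁆ + ⁅x, m z y⁆) ?_ ?_ ?_
    · intro u v hu hv y z
      simp only [map_add, LinearMap.add_apply, add_lie, lie_add, smul_add]
      rw [hu y z, hv y z]
      abel
    · intro c u hu y z
      simp only [map_smul, LinearMap.smul_apply, smul_lie, lie_smul]
      rw [smul_comm (2 : ℂ) c, hu y z, smul_add]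
    · intro i
      refine hgen (fun y => ∀ z, (2 : ℂ) • m z ⁅b i, y⁆ = ⁅m z (b i), y⁆ + ⁅b i, m z y⁆) ?_ ?_ ?_
      · intro u v hu hv z
        simp only [map_add, LinearMap.add_apply, add_lie, lie_add, smul_add]
        rw [hu z, hv z]
        abel
      · intro c u hu z
        simp only [map_smul, LinearMap.smul_apply, smul_lie, lie_smul]
        rw [smul_comm (2 : ℂ) c, hu z, smul_add]
      · intro j
        refine hgen (fun z => (2 : ℂ) • m z ⁅b i, b j⁆ = ⁅m z (b i), b j⁆ + ⁅b i, m z (b j)⁆) ?_ ?_ ?_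
        · intro u v hu hv
          simp only [map_add, LinearMap.add_apply, add_lie, lie_add, smul_add]
          rw [hu, hv]
          abel
        · intro c u hu
          simp only [map_smul, LinearMap.smul_apply, smul_lie, lie_smul]
          rw [smul_comm (2 : ℂ) c, hu, smul_add]
        · intro k
          rw [hbe i, hbe j, hbe k]
          rcases i with ⟨i, hi⟩; rcases j with ⟨j, hj⟩; rcases k with ⟨k, hk⟩
          interval_cases i <;> interval_cases j <;> interval_cases k <;>
            (simp only [Nat.reduceAdd, LB11, LB12, LB13, LB14, LB15, LB16, LB21, LB22, LB23, LB24, LB25, LB26, LB31, LB32, LB33, LB34, LB35, LB36, LB41, LB42, LB43, LB44, LB45, LB46, LB51, LB52, LB53, LB54, LB55, LB56, LB61, LB62, LB63, LB64, LB65, LB66, MM11, MM12, MM13, MM14, MM15, MM16, MM21, MM22, MM23, MM24, MM25, MM26, MM31, MM32, MM33, MM34, MM35, MM36, MM41, MM42, MM43, MM44, MM45, MM46, MM51, MM52, MM53, MM54, MM55, MM56, MM61, MM62, MM63, MM64, MM65, MM66, map_add, map_smul, map_zero, map_neg,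
              LinearMap.add_apply, LinearMap.smul_apply, LinearMap.zero_apply,
              add_lie, lie_add, smul_lie, lie_smul, zero_lie, lie_zero, neg_lie, lie_neg,
              smul_zero, smul_neg, add_zero, zero_add, neg_zero] <;> module)
end
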